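/- arXiv:1906.03759 — 2 statements merged into one kernel-verified Lean document; each statement's English description precedes it below -/
import Mathlib

section
/- Let N, M be positive integers with 2M ≤ N, let U, D, U', D' ⊆ {1,…,M} satisfy U∪D = U'∪D', U∩D = U'∩D' and 1 ∈ U∩D (hence 1 ∈ U'∩D'), and let α, β ∈ {2,…,M}∖(U∪D). Write W̄ := {N+1−w : w∈W}, αU := U∪{α}, βD := D∪{β}. Then the following three quantities are unchanged when (U,D) is replaced by (U',D'): (i) Δ((U∖{1})∪D̄)·Δ(αU∪(βD)‾) / [Δ(U∪D̄)·Δ((αU∖{1})∪(βD)‾)]; (ii) Δ(αU∪D̄)·Δ((U∖{1})∪(βD)‾) / [Δ(U∪D̄)·Δ((αU∖{1})∪(βD)‾)]; (iii) Δ(U∪(βD)‾)·Δ((αU∖{1})∪D̄) / [Δ(U∪D̄)·Δ((αU∖{1})∪(βD)‾)]. (All the sets occurring consist of distinct integers, so all the Δ's are nonzero.) -/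
open Finset

namespace Shuf

/-- A unit triangle of the triangular lattice: `(a, b, o)` where `o = false` is the
up-pointing unit triangle with vertices `(a,b), (a+1,b), (a,b+1)` (in the lattice
coordinates whose embedding is `(a,b) ↦ (a + b/2, b·√3/2)`), and `o = true` is the
down-pointing unit triangle with vertices `(a+1,b), (a,b+1), (a+1,b+1)`. -/
abbrev Tri : Type := ℤ × ℤ × Bool

/-- Adjacency from an up-pointing triangle `s` to a down-pointing triangle `t`
(sharing a unit edge). -/
def adjUD (s t : Tri) : Prop :=
  s.2.2 = false ∧ t.2.2 = true ∧
    ((t.1 = s.1 ∧ t.2.1 = s.2.1) ∨ (t.1 = s.1 - 1 ∧ t.2.1 = s.2.1) ∨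
      (t.1 = s.1 ∧ t.2.1 = s.2.1 - 1))

/-- Two unit triangles share a unit edge (form a lozenge). -/
def adj (s t : Tri) : Prop := adjUD s t ∨ adjUD t s

/-- A lozenge tiling of the region `R` with barrier edges `Bar`, encoded as the
involution pairing each unit triangle of `R` with the one it is matched to. -/
def IsTiling (R : Set Tri) (Bar : Set (Tri × Tri)) (f : Tri → Tri) : Prop :=
  (∀ t, t ∉ R → f t = t) ∧
    ∀ t ∈ R, f t ∈ R ∧ adj t (f t) ∧ f (f t) = t ∧ (t, f t) ∉ Bar ∧ (f t, t) ∉ Bar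

/-- `M R Bar` : the number of lozenge tilings of the region `R` with barriers `Bar`. -/
noncomputable def M (R : Set Tri) (Bar : Set (Tri × Tri)) : ℕ :=
  Nat.card {f : Tri → Tri // IsTiling R Bar f}

/-- 180° rotation about the point `(c.1/2, c.2/2)` (lattice coordinates). -/
def rot (c : ℤ × ℤ) (t : Tri) : Tri := (c.1 - t.1 - 1, c.2 - t.2.1 - 1, !t.2.2)

/-- `Mc c R Bar` : the number of lozenge tilings of `R` invariant under the 180°
rotation about the point `(c.1/2, c.2/2)`. -/
noncomputable def Mc (c : ℤ × ℤ) (R : Set Tri) (Bar : Set (Tri × Tri)) : ℕ :=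
  Nat.card {f : Tri → Tri // IsTiling R Bar f ∧ ∀ t, f (rot c t) = rot c (f t)}

/-- The doubly-dented hexagon whose horizontal axis (at height `0`) runs from the
west vertex `(0,0)` to the east vertex `(L,0)`, whose upper half is a trapezoid of
height `hu` and whose lower half is a trapezoid of height `hd`; the up-pointing unit
triangle just above the axis at position `i` is removed for `i ∈ U`, and the
down-pointing one just below the axis at position `i` is removed for `i ∈ D`
(positions are labelled `1,…,L` from left to right). -/
def HRegion (L hu hd : ℤ) (U D : Set ℤ) : Set Tri :=
  {t | (t.2.2 = false ∧ 0 ≤ t.2.1 ∧ t.2.1 < hu ∧ 0 ≤ t.1 ∧ t.1 + t.2.1 ≤ L - 1 ∧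
          (t.2.1 = 0 → t.1 + 1 ∉ U)) ∨
       (t.2.2 = true ∧ 0 ≤ t.2.1 ∧ t.2.1 < hu ∧ 0 ≤ t.1 ∧ t.1 + t.2.1 ≤ L - 2) ∨
       (t.2.2 = false ∧ -hd ≤ t.2.1 ∧ t.2.1 ≤ -1 ∧ -t.2.1 ≤ t.1 ∧ t.1 ≤ L - 1) ∨
       (t.2.2 = true ∧ -hd ≤ t.2.1 ∧ t.2.1 ≤ -1 ∧ -t.2.1 - 1 ≤ t.1 ∧ t.1 ≤ L - 1 ∧
          (t.2.1 = -1 → t.1 + 1 ∉ D))}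

/-- The barrier edges along the axis at the positions of `B`: the barrier at
position `i` forbids the vertical lozenge formed by the up-triangle just above and
the down-triangle just below the `i`-th unit segment of the axis. -/
def HBar (B : Set ℤ) : Set (Tri × Tri) :=
  {e | ∃ i ∈ B, e = ((i - 1, 0, false), (i - 1, -1, true)) ∨
                 e = ((i - 1, -1, true), (i - 1, 0, false))}

/-- `MH x y U D B` : the number of lozenge tilings of the doubly-dented hexagon
`H_{x,y}(U; D; B)`. -/
noncomputable def MH (x y : ℕ) (U D B : Finset ℤ) : ℕ :=
  M (HRegion (x + y + (U ∪ D).card) (y + U.card) (y + D.card) ↑U ↑D) (HBar ↑B)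

/-- `mir N W = {N + 1 - w : w ∈ W}`, the reflection of an index set. -/
def mir (N : ℤ) (W : Finset ℤ) : Finset ℤ := W.image (fun w => N + 1 - w)

/-- `MCS x y U D B` : the number of lozenge tilings of the centrally symmetric
doubly-dented hexagon `CS_{x,y}(U; D; B) = H_{x,y}(U ∪ D̄; D ∪ Ū; B ∪ B̄)`,
where `N = x + y + 2|U ∪ D|` and `W̄ = {N+1-w : w ∈ W}`. -/
noncomputable def MCS (x y : ℕ) (U D B : Finset ℤ) : ℕ :=
  MH x y (U ∪ mir (x + y + 2 * (U ∪ D).card) D) (D ∪ mir (x + y + 2 * (U ∪ D).card) U)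
    (B ∪ mir (x + y + 2 * (U ∪ D).card) B)

/-- `McCS x y U D B` : the number of centrally symmetric lozenge tilings of
`CS_{x,y}(U; D; B)` (tilings invariant under the 180° rotation about the center
`(N/2, 0)` of the region, `N = x + y + 2|U ∪ D|`). -/
noncomputable def McCS (x y : ℕ) (U D B : Finset ℤ) : ℕ :=
  let N : ℤ := x + y + 2 * (U ∪ D).card
  let U' : Finset ℤ := U ∪ mir N D
  let D' : Finset ℤ := D ∪ mir N U
  Mc (N, 0)
    (HRegion (x + y + (U' ∪ D').card) (y + U'.card) (y + D'.card) ↑U' ↑D')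
    (HBar ↑(B ∪ mir N B))

/-- `Δprod S = ∏_{s < s' ∈ S} (s' - s)`. -/
def Δprod (S : Finset ℤ) : ℤ :=
  ∏ p ∈ (S ×ˢ S).filter (fun p => p.1 < p.2), (p.2 - p.1)

/-- MacMahon's box formula `PP(a,b,c)`. -/
def PP (a b c : ℕ) : ℚ :=
  ∏ i ∈ Icc 1 a, ∏ j ∈ Icc 1 b, ∏ k ∈ Icc 1 c,
    (((i : ℚ) + j + k - 1) / ((i : ℚ) + j + k - 2))

/-- The hyperfactorial `H(n) = 0!·1!⋯(n-1)!`. -/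
def hyperfac (n : ℕ) : ℕ := ∏ k ∈ range n, k.factorial

/-- The Pochhammer symbol `(q)_r = q(q+1)⋯(q+r-1)`. -/
def poch (q : ℚ) (r : ℕ) : ℚ := ∏ i ∈ range r, (q + i)

/-- The dented semihexagon `T_{a,b}(S)`: the trapezoid with north side `b`, slanted
sides `a` and base `a + b` lying above the horizontal axis (base from `(0,0)` to
`(a+b,0)`), with the up-pointing unit triangles at the positions of `S` removed
from its base. -/
def TRegion (a b : ℤ) (S : Set ℤ) : Set Tri :=
  {t | (t.2.2 = false ∧ 0 ≤ t.2.1 ∧ t.2.1 < a ∧ 0 ≤ t.1 ∧ t.1 + t.2.1 ≤ a + b - 1 ∧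
          (t.2.1 = 0 → t.1 + 1 ∉ S)) ∨
       (t.2.2 = true ∧ 0 ≤ t.2.1 ∧ t.2.1 < a ∧ 0 ≤ t.1 ∧ t.1 + t.2.1 ≤ a + b - 2)}

/-- `MT a b S` : the number of lozenge tilings of `T_{a,b}(S)`. -/
noncomputable def MT (a b : ℤ) (S : Finset ℤ) : ℕ := M (TRegion a b ↑S) ∅

/-- The trapezoid with base `L` (from `(0,0)` to `(L,0)`), height `h`. -/
def trapRegion (L h : ℤ) : Set Tri :=
  {t | (t.2.2 = false ∧ 0 ≤ t.2.1 ∧ t.2.1 < h ∧ 0 ≤ t.1 ∧ t.1 + t.2.1 ≤ L - 1) ∨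
       (t.2.2 = true ∧ 0 ≤ t.2.1 ∧ t.2.1 < h ∧ 0 ≤ t.1 ∧ t.1 + t.2.1 ≤ L - 2)}

/-- The unit triangles of the up-pointing triangle of side `s` whose base runs from
`(p,0)` to `(p+s,0)` (lying above the axis). -/
def upTriSet (p : ℤ) (s : ℕ) : Set Tri :=
  {t | t.2.2 = false ∧ 0 ≤ t.2.1 ∧ p ≤ t.1 ∧ t.1 + t.2.1 ≤ p + s - 1} ∪
  {t | t.2.2 = true ∧ 0 ≤ t.2.1 ∧ p ≤ t.1 ∧ t.1 + t.2.1 ≤ p + s - 2}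

/-- The unit triangles of the down-pointing triangle of side `s` whose top edge runs
from `(p,0)` to `(p+s,0)` (lying below the axis). -/
def downTriSet (p : ℤ) (s : ℕ) : Set Tri :=
  {t | t.2.2 = true ∧ -(s : ℤ) ≤ t.2.1 ∧ t.2.1 ≤ -1 ∧ p - t.2.1 - 1 ≤ t.1 ∧ t.1 ≤ p + s - 1} ∪
  {t | t.2.2 = false ∧ -(s : ℤ) ≤ t.2.1 ∧ t.2.1 ≤ -1 ∧ p - t.2.1 ≤ t.1 ∧ t.1 ≤ p + s - 1}

/-- A triangle of side `s` along the axis starting at `p`, up- or down-pointing. -/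
def triSet (p : ℤ) (s : ℕ) (up : Bool) : Set Tri :=
  if up then upTriSet p s else downTriSet p s

/-- The removed triangles, at the dents given by a run/gap sequence
`a₁ (run), a₂ (gap), a₃ (run), …` starting at `p`. -/
def seqRemoved : ℤ → List ℕ → Set Tri
  | _, [] => ∅
  | p, [s] => upTriSet p s
  | p, s :: g :: r => upTriSet p s ∪ seqRemoved (p + s + g) r

/-- `oSum [a₁,a₂,…] = a₁ + a₃ + a₅ + ⋯`. -/
def oSum : List ℕ → ℕ
  | [] => 0
  | [s] => s
  | s :: _ :: r => s + oSum r

/-- `sFun l = s(a₁,…,a_r)` : the number of lozenge tilings of the generalized dented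
semihexagon `S(a₁,…,a_r)` (trapezoid of base `a₁+⋯+a_r` and height `a₁+a₃+⋯`, with
up-pointing triangles of sides `a₁, a₃, …` removed from its base at mutual
distances `a₂, a₄, …`, the first one touching the west vertex). -/
noncomputable def sFun (l : List ℕ) : ℕ :=
  M (trapRegion l.sum (oSum l) \ seqRemoved 0 l) ∅

/-- A fern: a chain of lattice triangles of alternating orientations along the axis,
given by the list of side-lengths and the orientation of the first triangle. -/
structure Fern where
  lengths : List ℕ
  firstUp : Bool

/-- The total length of a fern. -/
def Fern.total (F : Fern) : ℕ := F.lengths.sum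

/-- Sum of the entries at even positions if the flag is `true` (resp. odd positions
if `false`). -/
def upLenAux : Bool → List ℕ → ℕ
  | _, [] => 0
  | true, s :: r => s + upLenAux false r
  | false, _ :: r => upLenAux true r

/-- The sum of side-lengths of the up-pointing triangles of a fern. -/
def Fern.up (F : Fern) : ℕ := upLenAux F.firstUp F.lengths

/-- The sum of side-lengths of the down-pointing triangles of a fern. -/
def Fern.down (F : Fern) : ℕ := upLenAux (!F.firstUp) F.lengths

/-- The image of a fern under 180° rotation. -/
def Fern.rot (F : Fern) : Fern :=
  ⟨F.lengths.reverse, if F.lengths.length % 2 = 1 then !F.firstUp else F.firstUp⟩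

/-- Concatenation of two ferns (the second continuing the alternation of the first). -/
def Fern.cat (F G : Fern) : Fern := ⟨F.lengths ++ G.lengths, F.firstUp⟩

/-- The unit triangles of a chain of triangles of alternating orientations starting
at `p` with the first orientation `o`. -/
def chainSet : ℤ → Bool → List ℕ → Set Tri
  | _, _, [] => ∅
  | p, o, s :: r => triSet p s o ∪ chainSet (p + s) (!o) r

/-- The unit triangles of the ferns `Fs` placed along the axis starting at `p` with
gaps `ds` between consecutive ferns. -/
def fernsSet : ℤ → List Fern → List ℕ → Set Tri
  | _, [], _ => ∅
  | p, F :: Fs, ds => chainSet p F.firstUp F.lengths ∪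
      fernsSet (p + F.total + ds.headI) Fs ds.tail

def totUp (Fs : List Fern) : ℕ := (Fs.map Fern.up).sum
def totDown (Fs : List Fern) : ℕ := (Fs.map Fern.down).sum

/-- The hexagon with ferns removed `R_{x,y}(F₁,…,F_k | d₁,…,d_{k-1})`. -/
def RRegion (x y : ℕ) (Fs : List Fern) (ds : List ℕ) : Set Tri :=
  HRegion (x + y + totUp Fs + totDown Fs) (y + totUp Fs) (y + totDown Fs) ∅ ∅ \
    fernsSet 0 Fs ds

/-- The number of lozenge tilings of `R_{x,y}(F₁,…,F_k | d₁,…,d_{k-1})`. -/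
noncomputable def MR (x y : ℕ) (Fs : List Fern) (ds : List ℕ) : ℕ :=
  M (RRegion x y Fs ds) ∅

/-- The number of centrally symmetric lozenge tilings of
`R_{x,y}(F₁,…,F_k | d₁,…,d_{k-1})` (for a centrally symmetric datum; the center of
the hexagon is the midpoint `(L/2, 0)` of its axis). -/
noncomputable def McR (x y : ℕ) (Fs : List Fern) (ds : List ℕ) : ℕ :=
  Mc ((x + y + totUp Fs + totDown Fs : ℤ), 0) (RRegion x y Fs ds) ∅

/-- The positions (labelled `1,2,…` from the left) of the removed up-pointing unit
triangles just above the axis, for a chain starting at `p` with first orientation `o`. -/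
noncomputable def upRunPos : ℤ → Bool → List ℕ → Finset ℤ
  | _, _, [] => ∅
  | p, true, s :: r => Finset.Icc (p + 1) (p + s) ∪ upRunPos (p + s) false r
  | p, false, s :: r => upRunPos (p + s) true r

/-- The positions of the removed up-pointing unit triangles along the axis for the
ferns `Fs` with gaps `ds`, starting at `p`. -/
noncomputable def upPosAll : ℤ → List Fern → List ℕ → Finset ℤ
  | _, [], _ => ∅
  | p, F :: Fs, ds => upRunPos p F.firstUp F.lengths ∪
      upPosAll (p + F.total + ds.headI) Fs ds.tail

/-- The positions of the removed down-pointing unit triangles along the axis. -/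
noncomputable def downPosAll (p : ℤ) (Fs : List Fern) (ds : List ℕ) : Finset ℤ :=
  upPosAll p (Fs.map (fun F => Fern.mk F.lengths (!F.firstUp))) ds

/-- The unit triangles removed in the generalized dented semihexagon determined by
the maximal runs of the position set `A`: a unit triangle is removed precisely when
the interval of base positions it lies over is contained in `A`. -/
def runRemoved (A : Finset ℤ) : Set Tri :=
  {t | ∀ i ∈ Finset.Icc (t.1 + 1) (t.1 + t.2.1 + (if t.2.2 then 2 else 1)), i ∈ A}

/-- `MS A` : the number of lozenge tilings of the generalized dented semihexagon
`S(e₁, e₂, …)` where `e₁, e₃, …` are the lengths of the maximal runs of `A` and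
`e₂, e₄, …` the gaps between consecutive runs (base `= max A`, height `= |A|`). -/
noncomputable def MS (A : Finset ℤ) : ℕ :=
  M (trapRegion (WithBot.unbotD 0 A.max) A.card \ runRemoved A) ∅

/-- The fern list of `E_{x,y}(F₁,…,F_k | d₁,…,d_{k-1})`:
`F₁,…,F_{k-1}, F_k ∘ F̄_k, F̄_{k-1},…,F̄₁`. -/
def EFerns (Fs : List Fern) : List Fern :=
  Fs.dropLast ++ Fern.cat (Fs.getLastD ⟨[], true⟩) (Fern.rot (Fs.getLastD ⟨[], true⟩)) ::
    (Fs.dropLast.map Fern.rot).reverse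

/-- The gap list of `E_{x,y}` : `d₁,…,d_{k-1},d_{k-1},…,d₁`. -/
def Egaps (ds : List ℕ) : List ℕ := ds ++ ds.reverse

/-- The fern list of `E'_{x,y}(F₁,…,F_k | d₁,…,d_{k-1})` : `F₁,…,F_k,F̄_k,…,F̄₁`. -/
def E'Ferns (Fs : List Fern) : List Fern := Fs ++ (Fs.map Fern.rot).reverse

/-- The gap list of `E'_{x,y}` : `d₁,…,d_{k-1},1,d_{k-1},…,d₁`. -/
def E'gaps (ds : List ℕ) : List ℕ := ds ++ 1 :: ds.reverse

end Shuf

namespace Shuf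

lemma Δprod_pos (S : Finset ℤ) : 0 < Δprod S := by
  unfold Δprod
  apply Finset.prod_pos
  intro p hp
  simp only [mem_filter, mem_product] at hp
  omega

lemma Δprod_singleton (x : ℤ) : Δprod {x} = 1 := by
  unfold Δprod
  apply Finset.prod_eq_one
  intro p hp
  simp only [mem_filter, mem_product, mem_singleton] at hp
  omega

lemma Δprod_union {A B : Finset ℤ} (h : ∀ a ∈ A, ∀ b ∈ B, a < b) :
    Δprod (A ∪ B) = Δprod A * Δprod B * ∏ a ∈ A, ∏ b ∈ B, (b - a) := by
  classical
  have hAB : ∀ x, x ∈ A → x ∈ B → False := fun x hA hB => lt_irrefl x (h x hA x hB)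
  unfold Δprod
  have hsplit : ((A ∪ B) ×ˢ (A ∪ B)).filter (fun p => p.1 < p.2)
      = ((A ×ˢ A).filter (fun p => p.1 < p.2)) ∪
        (((B ×ˢ B).filter (fun p => p.1 < p.2)) ∪ A ×ˢ B) := by
    ext p
    simp only [mem_filter, mem_union, mem_product]
    constructor
    · rintro ⟨⟨h1 | h1, h2 | h2⟩, hlt⟩
      · exact Or.inl ⟨⟨h1, h2⟩, hlt⟩
      · exact Or.inr (Or.inr ⟨h1, h2⟩)
      · exact absurd (h _ h2 _ h1) (by omega)
      · exact Or.inr (Or.inl ⟨⟨h1, h2⟩, hlt⟩)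
    · rintro (⟨⟨h1, h2⟩, hlt⟩ | ⟨⟨h1, h2⟩, hlt⟩ | ⟨h1, h2⟩)
      · exact ⟨⟨Or.inl h1, Or.inl h2⟩, hlt⟩
      · exact ⟨⟨Or.inr h1, Or.inr h2⟩, hlt⟩
      · exact ⟨⟨Or.inl h1, Or.inr h2⟩, h _ h1 _ h2⟩
  have hd2 : Disjoint ((B ×ˢ B).filter (fun p => p.1 < p.2)) (A ×ˢ B) := by
    rw [Finset.disjoint_left]
    rintro p hp1 hp2
    simp only [mem_filter, mem_product] at hp1 hp2
    exact hAB p.1 hp2.1 hp1.1.1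
  have hd1 : Disjoint ((A ×ˢ A).filter (fun p => p.1 < p.2))
      (((B ×ˢ B).filter (fun p => p.1 < p.2)) ∪ A ×ˢ B) := by
    rw [Finset.disjoint_left]
    rintro p hp1 hp2
    simp only [mem_filter, mem_product, mem_union] at hp1 hp2
    rcases hp2 with h2 | h2
    · exact hAB p.1 hp1.1.1 h2.1.1
    · exact hAB p.2 hp1.1.2 h2.2
  rw [hsplit, Finset.prod_union hd1, Finset.prod_union hd2, Finset.prod_product]
  ring

lemma Δprod_insert_min {x : ℤ} {A : Finset ℤ} (h : ∀ a ∈ A, x < a) :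
    Δprod (insert x A) = (∏ a ∈ A, (a - x)) * Δprod A := by
  have : insert x A = {x} ∪ A := Finset.insert_eq x A
  rw [this, Δprod_union (by simpa using h), Δprod_singleton]
  simp [mul_comm]

lemma Δprod_mir (N : ℤ) (W : Finset ℤ) : Δprod (mir N W) = Δprod W := by
  classical
  unfold Δprod mir
  refine Finset.prod_bij' (fun p _ => ((N + 1 - p.2, N + 1 - p.1) : ℤ × ℤ))
    (fun p _ => ((N + 1 - p.2, N + 1 - p.1) : ℤ × ℤ)) ?_ ?_ ?_ ?_ ?_
  · intro p hp
    simp only [mem_filter, mem_product, mem_image] at hp ⊢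
    obtain ⟨⟨⟨a, ha, h1⟩, ⟨b, hb, h2⟩⟩, hlt⟩ := hp
    refine ⟨⟨by rw [← h2]; simpa using hb, by rw [← h1]; simpa using ha⟩, by omega⟩
  · intro p hp
    simp only [mem_filter, mem_product, mem_image] at hp ⊢
    obtain ⟨⟨h1, h2⟩, hlt⟩ := hp
    exact ⟨⟨⟨p.2, h2, by ring⟩, ⟨p.1, h1, by ring⟩⟩, by omega⟩
  all_goals intro p hp
  all_goals first | (dsimp only; ring) | simp

lemma Δprod_split (N : ℤ) (X Y : Finset ℤ) (h : ∀ a ∈ X, ∀ d ∈ Y, a + d ≤ N) :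
    Δprod (X ∪ mir N Y) = Δprod X * Δprod Y * ∏ a ∈ X, ∏ d ∈ Y, (N + 1 - d - a) := by
  rw [Δprod_union, Δprod_mir]
  · congr 1
    apply Finset.prod_congr rfl
    intro a _
    rw [mir, Finset.prod_image (by intro x _ y _ hxy; have h' : N + 1 - x = N + 1 - y := hxy; omega)]
  · intro a ha b hb
    simp only [mir, mem_image] at hb
    obtain ⟨d, hd, rfl⟩ := hb
    have := h a ha d hd; omega

lemma stmt11_key (N M : ℕ) (hNM : 2 * M ≤ N)
    (U D : Finset ℤ) (hU : U ⊆ Icc 1 (M : ℤ)) (hD : D ⊆ Icc 1 (M : ℤ))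
    (h1U : (1 : ℤ) ∈ U) (h1D : (1 : ℤ) ∈ D)
    (α β : ℤ) (hα2 : 2 ≤ α) (hαM : α ≤ (M : ℤ)) (hβ2 : 2 ≤ β) (hβM : β ≤ (M : ℤ))
    (hαU : α ∉ U) (hβD : β ∉ D) :
    Δprod ((U \ {1}) ∪ mir N D) * Δprod (insert α U ∪ mir N (insert β D)) =
      ((α - 1) * ((N : ℤ) - β)) *
        (Δprod (U ∪ mir N D) * Δprod ((insert α U \ {1}) ∪ mir N (insert β D))) ∧
    Δprod (insert α U ∪ mir N D) * Δprod ((U \ {1}) ∪ mir N (insert β D)) * ((N : ℤ) + 1 - α - β) =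
      (α - 1) *
        (Δprod (U ∪ mir N D) * Δprod ((insert α U \ {1}) ∪ mir N (insert β D))) ∧
    Δprod (U ∪ mir N (insert β D)) * Δprod ((insert α U \ {1}) ∪ mir N D) * ((N : ℤ) + 1 - α - β) =
      ((N : ℤ) - β) *
        (Δprod (U ∪ mir N D) * Δprod ((insert α U \ {1}) ∪ mir N (insert β D))) := by
  classical
  have hNM' : 2 * (M : ℤ) ≤ (N : ℤ) := by exact_mod_cast hNM
  set A1 : Finset ℤ := U.erase 1 with hA1def
  set A3 : Finset ℤ := insert α A1 with hA3def
  have hαne1 : α ≠ 1 := by omega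
  have hU1 : U \ {1} = A1 := by rw [hA1def, Finset.erase_eq]
  have hA0 : U = insert 1 A1 := (Finset.insert_erase h1U).symm
  have hαA1 : α ∉ A1 := fun h => hαU (Finset.mem_of_mem_erase h)
  have h1A3 : (1 : ℤ) ∉ A3 := by
    simp only [hA3def, Finset.mem_insert]
    rintro (h | h)
    · exact hαne1 h.symm
    · exact Finset.notMem_erase 1 U h
  have hA2 : insert α U = insert 1 A3 := by
    rw [hA0, hA3def, Finset.insert_comm]
  have hA3eq : insert α U \ {1} = A3 := by
    rw [hA2, Finset.sdiff_singleton_eq_erase, Finset.erase_insert h1A3]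
  -- bounds
  have hUb : ∀ a ∈ U, 1 ≤ a ∧ a ≤ (M : ℤ) := fun a ha => Finset.mem_Icc.mp (hU ha)
  have hDb : ∀ d ∈ D, 1 ≤ d ∧ d ≤ (M : ℤ) := fun d hd => Finset.mem_Icc.mp (hD hd)
  have hA1b : ∀ a ∈ A1, 1 < a ∧ a ≤ (M : ℤ) := by
    intro a ha
    have h1 := hUb a (Finset.mem_of_mem_erase ha)
    have h2 := Finset.ne_of_mem_erase ha
    omega
  have hA3b : ∀ a ∈ A3, 1 < a ∧ a ≤ (M : ℤ) := by
    intro a ha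
    rcases Finset.mem_insert.mp ha with h | h
    · omega
    · exact hA1b a h
  have hβDb : ∀ d ∈ insert β D, 1 ≤ d ∧ d ≤ (M : ℤ) := by
    intro d hd
    rcases Finset.mem_insert.mp hd with h | h
    · omega
    · exact hDb d h
  have hA0b : ∀ a ∈ U, 1 ≤ a ∧ a ≤ (M : ℤ) := hUb
  have hA2b : ∀ a ∈ insert α U, 1 ≤ a ∧ a ≤ (M : ℤ) := by
    intro a ha
    rcases Finset.mem_insert.mp ha with h | h
    · omega
    · exact hUb a h
  -- the atoms
  set p := Δprod A1 with hp
  set q := Δprod D with hq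
  set r := Δprod A3 with hr
  set s := Δprod (insert β D) with hs
  set Q := ∏ a ∈ A1, (a - 1) with hQ
  set E := ∏ d ∈ D, ((N : ℤ) - d) with hE
  set G := ∏ d ∈ D, ((N : ℤ) + 1 - d - α) with hG
  set F := ∏ a ∈ A1, ((N : ℤ) + 1 - β - a) with hF
  set c := ∏ a ∈ A1, ∏ d ∈ D, ((N : ℤ) + 1 - d - a) with hc
  -- auxiliary product computations
  have hΔ0 : Δprod U = Q * p := by
    rw [hA0]
    exact Δprod_insert_min (fun a ha => (hA1b a ha).1)
  have hΔ2 : Δprod (insert α U) = ((α - 1) * Q) * r := by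
    rw [hA2, Δprod_insert_min (fun a ha => (hA3b a ha).1), hA3def,
      Finset.prod_insert hαA1]
  have hEβ : ∏ d ∈ insert β D, ((N : ℤ) - d) = ((N : ℤ) - β) * E := by
    rw [Finset.prod_insert hβD]
  have hGβ : ∏ d ∈ insert β D, ((N : ℤ) + 1 - d - α) = ((N : ℤ) + 1 - β - α) * G := by
    rw [Finset.prod_insert hβD]
  -- C computations
  have hC10 : ∏ a ∈ A1, ∏ d ∈ D, ((N : ℤ) + 1 - d - a) = c := rfl
  have hC1β : ∏ a ∈ A1, ∏ d ∈ insert β D, ((N : ℤ) + 1 - d - a) = F * c := by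
    rw [← Finset.prod_mul_distrib]
    apply Finset.prod_congr rfl
    intro a _
    rw [Finset.prod_insert hβD]
  have hC30 : ∏ a ∈ A3, ∏ d ∈ D, ((N : ℤ) + 1 - d - a) = G * c := by
    rw [hA3def, Finset.prod_insert hαA1]
  have hC3β : ∏ a ∈ A3, ∏ d ∈ insert β D, ((N : ℤ) + 1 - d - a)
      = (((N : ℤ) + 1 - β - α) * G) * (F * c) := by
    rw [hA3def, Finset.prod_insert hαA1, hGβ]
    try rw [hC1β]
    try ring
  have hinner1 : ∀ S : Finset ℤ, (∏ d ∈ S, ((N : ℤ) + 1 - d - 1)) = ∏ d ∈ S, ((N : ℤ) - d) := by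
    intro S; apply Finset.prod_congr rfl; intro d _; ring
  have hC00 : ∏ a ∈ U, ∏ d ∈ D, ((N : ℤ) + 1 - d - a) = E * c := by
    rw [hA0, Finset.prod_insert (Finset.notMem_erase 1 U), hinner1]
  have hC0β : ∏ a ∈ U, ∏ d ∈ insert β D, ((N : ℤ) + 1 - d - a)
      = (((N : ℤ) - β) * E) * (F * c) := by
    rw [hA0, Finset.prod_insert (Finset.notMem_erase 1 U), hinner1, hEβ, hC1β]
  have hC20 : ∏ a ∈ insert α U, ∏ d ∈ D, ((N : ℤ) + 1 - d - a) = E * (G * c) := by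
    rw [hA2, Finset.prod_insert h1A3, hinner1, hC30]
  have hC2β : ∏ a ∈ insert α U, ∏ d ∈ insert β D, ((N : ℤ) + 1 - d - a)
      = (((N : ℤ) - β) * E) * ((((N : ℤ) + 1 - β - α) * G) * (F * c)) := by
    rw [hA2, Finset.prod_insert h1A3, hinner1, hEβ, hC3β]
  -- the eight Δprod factorizations
  have sum1 : ∀ a ∈ A1, ∀ d ∈ D, a + d ≤ (N : ℤ) := by
    intro a ha d hd; have := hA1b a ha; have := hDb d hd; omega
  have sum2 : ∀ a ∈ U, ∀ d ∈ D, a + d ≤ (N : ℤ) := by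
    intro a ha d hd; have := hUb a ha; have := hDb d hd; omega
  have sum3 : ∀ a ∈ insert α U, ∀ d ∈ insert β D, a + d ≤ (N : ℤ) := by
    intro a ha d hd; have := hA2b a ha; have := hβDb d hd; omega
  have sum4 : ∀ a ∈ A3, ∀ d ∈ insert β D, a + d ≤ (N : ℤ) := by
    intro a ha d hd; have := hA3b a ha; have := hβDb d hd; omega
  have sum5 : ∀ a ∈ insert α U, ∀ d ∈ D, a + d ≤ (N : ℤ) := by
    intro a ha d hd; have := hA2b a ha; have := hDb d hd; omega
  have sum6 : ∀ a ∈ A1, ∀ d ∈ insert β D, a + d ≤ (N : ℤ) := by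
    intro a ha d hd; have := hA1b a ha; have := hβDb d hd; omega
  have sum7 : ∀ a ∈ U, ∀ d ∈ insert β D, a + d ≤ (N : ℤ) := by
    intro a ha d hd; have := hUb a ha; have := hβDb d hd; omega
  have sum8 : ∀ a ∈ A3, ∀ d ∈ D, a + d ≤ (N : ℤ) := by
    intro a ha d hd; have := hA3b a ha; have := hDb d hd; omega
  have e1 : Δprod ((U \ {1}) ∪ mir N D) = p * q * c := by
    rw [hU1, Δprod_split _ _ _ sum1, hC10]
  have e2 : Δprod (U ∪ mir N D) = (Q * p) * q * (E * c) := by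
    rw [Δprod_split _ _ _ sum2, hΔ0, hC00]
  have e3 : Δprod (insert α U ∪ mir N (insert β D))
      = (((α - 1) * Q) * r) * s * ((((N : ℤ) - β) * E) * ((((N : ℤ) + 1 - β - α) * G) * (F * c))) := by
    rw [Δprod_split _ _ _ sum3, hΔ2, hC2β]
  have e4 : Δprod ((insert α U \ {1}) ∪ mir N (insert β D))
      = r * s * ((((N : ℤ) + 1 - β - α) * G) * (F * c)) := by
    rw [hA3eq, Δprod_split _ _ _ sum4, hC3β]
  have e5 : Δprod (insert α U ∪ mir N D) = (((α - 1) * Q) * r) * q * (E * (G * c)) := by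
    rw [Δprod_split _ _ _ sum5, hΔ2, hC20]
  have e6 : Δprod ((U \ {1}) ∪ mir N (insert β D)) = p * s * (F * c) := by
    rw [hU1, Δprod_split _ _ _ sum6, hC1β]
  have e7 : Δprod (U ∪ mir N (insert β D)) = (Q * p) * s * ((((N : ℤ) - β) * E) * (F * c)) := by
    rw [Δprod_split _ _ _ sum7, hΔ0, hC0β]
  have e8 : Δprod ((insert α U \ {1}) ∪ mir N D) = r * q * (G * c) := by
    rw [hA3eq, Δprod_split _ _ _ sum8, hC30]
  refine ⟨?_, ?_, ?_⟩
  · rw [e1, e2, e3, e4]; ring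
  · rw [e5, e6, e2, e4]; ring
  · rw [e7, e8, e2, e4]; ring


/-- Claim 3: the three Δ-ratios in the case `1 ∈ U ∩ D`. -/
theorem stmt11 (N M : ℕ) (hN : 0 < N) (hM : 0 < M) (hNM : 2 * M ≤ N)
    (U D U' D' : Finset ℤ)
    (hU : U ⊆ Icc 1 (M : ℤ)) (hD : D ⊆ Icc 1 (M : ℤ))
    (hU' : U' ⊆ Icc 1 (M : ℤ)) (hD' : D' ⊆ Icc 1 (M : ℤ))
    (hUD : U ∪ D = U' ∪ D') (hI : U ∩ D = U' ∩ D')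
    (h1 : (1 : ℤ) ∈ U ∩ D)
    (α β : ℤ) (hα : α ∈ Icc (2 : ℤ) (M : ℤ) \ (U ∪ D)) (hβ : β ∈ Icc (2 : ℤ) (M : ℤ) \ (U ∪ D)) :
    ((Δprod ((U \ {1}) ∪ mir N D) * Δprod (insert α U ∪ mir N (insert β D)) : ℤ) : ℚ) /
        ((Δprod (U ∪ mir N D) * Δprod ((insert α U \ {1}) ∪ mir N (insert β D)) : ℤ) : ℚ) =
      ((Δprod ((U' \ {1}) ∪ mir N D') * Δprod (insert α U' ∪ mir N (insert β D')) : ℤ) : ℚ) /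
        ((Δprod (U' ∪ mir N D') * Δprod ((insert α U' \ {1}) ∪ mir N (insert β D')) : ℤ) : ℚ) ∧
    ((Δprod (insert α U ∪ mir N D) * Δprod ((U \ {1}) ∪ mir N (insert β D)) : ℤ) : ℚ) /
        ((Δprod (U ∪ mir N D) * Δprod ((insert α U \ {1}) ∪ mir N (insert β D)) : ℤ) : ℚ) =
      ((Δprod (insert α U' ∪ mir N D') * Δprod ((U' \ {1}) ∪ mir N (insert β D')) : ℤ) : ℚ) /
        ((Δprod (U' ∪ mir N D') * Δprod ((insert α U' \ {1}) ∪ mir N (insert β D')) : ℤ) : ℚ) ∧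
    ((Δprod (U ∪ mir N (insert β D)) * Δprod ((insert α U \ {1}) ∪ mir N D) : ℤ) : ℚ) /
        ((Δprod (U ∪ mir N D) * Δprod ((insert α U \ {1}) ∪ mir N (insert β D)) : ℤ) : ℚ) =
      ((Δprod (U' ∪ mir N (insert β D')) * Δprod ((insert α U' \ {1}) ∪ mir N D') : ℤ) : ℚ) /
        ((Δprod (U' ∪ mir N D') * Δprod ((insert α U' \ {1}) ∪ mir N (insert β D')) : ℤ) : ℚ) := by
  obtain ⟨hαI, hαUD⟩ := Finset.mem_sdiff.mp hα
  obtain ⟨hβI, hβUD⟩ := Finset.mem_sdiff.mp hβ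
  obtain ⟨hα2, hαM⟩ := Finset.mem_Icc.mp hαI
  obtain ⟨hβ2, hβM⟩ := Finset.mem_Icc.mp hβI
  have hαU : α ∉ U := fun h => hαUD (Finset.mem_union_left _ h)
  have hβD : β ∉ D := fun h => hβUD (Finset.mem_union_right _ h)
  have hαU' : α ∉ U' := fun h => hαUD (hUD ▸ Finset.mem_union_left _ h)
  have hβD' : β ∉ D' := fun h => hβUD (hUD ▸ Finset.mem_union_right _ h)
  obtain ⟨h1U, h1D⟩ := Finset.mem_inter.mp h1
  obtain ⟨h1U', h1D'⟩ := Finset.mem_inter.mp (hI ▸ h1)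
  obtain ⟨k1, k2, k3⟩ := stmt11_key N M hNM U D hU hD h1U h1D α β hα2 hαM hβ2 hβM hαU hβD
  obtain ⟨k1', k2', k3'⟩ := stmt11_key N M hNM U' D' hU' hD' h1U' h1D' α β hα2 hαM hβ2 hβM hαU' hβD'
  have hden : (0 : ℤ) < Δprod (U ∪ mir N D) * Δprod ((insert α U \ {1}) ∪ mir N (insert β D)) :=
    mul_pos (Δprod_pos _) (Δprod_pos _)
  have hden' : (0 : ℤ) < Δprod (U' ∪ mir N D') * Δprod ((insert α U' \ {1}) ∪ mir N (insert β D')) :=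
    mul_pos (Δprod_pos _) (Δprod_pos _)
  have hdenQ : ((Δprod (U ∪ mir N D) * Δprod ((insert α U \ {1}) ∪ mir N (insert β D)) : ℤ) : ℚ) ≠ 0 := by
    exact_mod_cast hden.ne'
  have hdenQ' : ((Δprod (U' ∪ mir N D') * Δprod ((insert α U' \ {1}) ∪ mir N (insert β D')) : ℤ) : ℚ) ≠ 0 := by
    exact_mod_cast hden'.ne'
  have hNM' : 2 * (M : ℤ) ≤ (N : ℤ) := by exact_mod_cast hNM
  have hw : ((N : ℤ) + 1 - α - β) ≠ 0 := by omega
  refine ⟨?_, ?_, ?_⟩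
  · rw [div_eq_div_iff hdenQ hdenQ']
    have : (Δprod ((U \ {1}) ∪ mir N D) * Δprod (insert α U ∪ mir N (insert β D))) *
        (Δprod (U' ∪ mir N D') * Δprod ((insert α U' \ {1}) ∪ mir N (insert β D'))) =
        (Δprod ((U' \ {1}) ∪ mir N D') * Δprod (insert α U' ∪ mir N (insert β D'))) *
        (Δprod (U ∪ mir N D) * Δprod ((insert α U \ {1}) ∪ mir N (insert β D))) := by
      linear_combination (Δprod (U' ∪ mir N D') * Δprod ((insert α U' \ {1}) ∪ mir N (insert β D'))) * k1
        - (Δprod (U ∪ mir N D) * Δprod ((insert α U \ {1}) ∪ mir N (insert β D))) * k1'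
    exact_mod_cast this
  · rw [div_eq_div_iff hdenQ hdenQ']
    have : (Δprod (insert α U ∪ mir N D) * Δprod ((U \ {1}) ∪ mir N (insert β D))) *
        (Δprod (U' ∪ mir N D') * Δprod ((insert α U' \ {1}) ∪ mir N (insert β D'))) =
        (Δprod (insert α U' ∪ mir N D') * Δprod ((U' \ {1}) ∪ mir N (insert β D'))) *
        (Δprod (U ∪ mir N D) * Δprod ((insert α U \ {1}) ∪ mir N (insert β D))) := by
      apply mul_right_cancel₀ hw
      linear_combination (Δprod (U' ∪ mir N D') * Δprod ((insert α U' \ {1}) ∪ mir N (insert β D'))) * k2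
        - (Δprod (U ∪ mir N D) * Δprod ((insert α U \ {1}) ∪ mir N (insert β D))) * k2'
    exact_mod_cast this
  · rw [div_eq_div_iff hdenQ hdenQ']
    have : (Δprod (U ∪ mir N (insert β D)) * Δprod ((insert α U \ {1}) ∪ mir N D)) *
        (Δprod (U' ∪ mir N D') * Δprod ((insert α U' \ {1}) ∪ mir N (insert β D'))) =
        (Δprod (U' ∪ mir N (insert β D')) * Δprod ((insert α U' \ {1}) ∪ mir N D')) *
        (Δprod (U ∪ mir N D) * Δprod ((insert α U \ {1}) ∪ mir N (insert β D))) := by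
      apply mul_right_cancel₀ hw
      linear_combination (Δprod (U' ∪ mir N D') * Δprod ((insert α U' \ {1}) ∪ mir N (insert β D'))) * k3
        - (Δprod (U ∪ mir N D) * Δprod ((insert α U \ {1}) ∪ mir N (insert β D))) * k3'
    exact_mod_cast this


end Shuf
end

section
/- Let y be a nonnegative integer, b a nonnegative integer, and let U, D, B ⊆ {1,…,⌊N/2⌋} with n=|U∪D|, |B|=b, N=2b+y+2n and B∩(U∪D)=∅. Write u=|U|, d=|D|, m=2n−u−d, D̄={N+1−t : t∈D}, O := (U∪D∪B) ∪ {N+1−w : w ∈ U∪D∪B} and O^c := {1,…,N}∖O. Then M_c(CS_{2b,y}(U;D;B)) = M(T_{y+u+d, 2b+m}(O^c ∪ U ∪ D̄)), i.e. the number of centrally symmetric lozenge tilings of CS_{2b,y}(U;D;B) equals the number of lozenge tilings of the dented semihexagon with north side 2b+m, slanted sides y+u+d, base N, and dents at the positions of O^c ∪ U ∪ D̄. -/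
open Finset

namespace Shuf


section Aux

lemma rot_rot (c : ℤ × ℤ) (t : Tri) : rot c (rot c t) = t := by
  obtain ⟨a, j, o⟩ := t
  simp only [rot, Bool.not_not]
  refine Prod.ext (by ring) (Prod.ext (by ring) rfl)

lemma adjUD_rot (c : ℤ × ℤ) (t s : Tri) : adjUD (rot c t) (rot c s) ↔ adjUD s t := by
  obtain ⟨a, j, o⟩ := t
  obtain ⟨a', j', o'⟩ := s
  simp only [adjUD, rot, Bool.not_eq_false', Bool.not_eq_true']
  constructor
  · rintro ⟨h1, h2, h3⟩
    exact ⟨h2, h1, by omega⟩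
  · rintro ⟨h1, h2, h3⟩
    exact ⟨h2, h1, by omega⟩

lemma adj_rot (c : ℤ × ℤ) (t s : Tri) : adj (rot c t) (rot c s) ↔ adj t s := by
  unfold adj
  rw [adjUD_rot, adjUD_rot]
  tauto

lemma mem_mir {N x : ℤ} {W : Finset ℤ} : x ∈ mir N W ↔ N + 1 - x ∈ W := by
  unfold mir
  simp only [Finset.mem_image]
  constructor
  · rintro ⟨w, hw, rfl⟩
    have : N + 1 - (N + 1 - w) = w := by ring
    rwa [this]
  · intro h
    exact ⟨_, h, by ring⟩

lemma mir_card (N : ℤ) (W : Finset ℤ) : (mir N W).card = W.card :=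
  Finset.card_image_of_injective _ (fun a b h => by omega)

lemma mir_union (N : ℤ) (V W : Finset ℤ) : mir N (V ∪ W) = mir N V ∪ mir N W :=
  Finset.image_union _ _

lemma mir_mir (N : ℤ) (W : Finset ℤ) : mir N (mir N W) = W := by
  ext x
  rw [mem_mir, mem_mir]
  have : N + 1 - (N + 1 - x) = x := by ring
  rw [this]

lemma adj_up_cases {a j : ℤ} {s : Tri} (h : adj (a, j, false) s) :
    s = (a, j, true) ∨ s = (a - 1, j, true) ∨ s = (a, j - 1, true) := by
  obtain ⟨a', j', o'⟩ := s
  rcases h with ⟨_, h2, h3⟩ | ⟨h1, h2, _⟩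
  · simp only at h2
    subst h2
    rcases h3 with ⟨h, h'⟩ | ⟨h, h'⟩ | ⟨h, h'⟩ <;>
      simp only [Prod.mk.injEq, and_true] at h h' ⊢ <;> omega
  · simp at h2
lemma adj_down_cases {a j : ℤ} {s : Tri} (h : adj (a, j, true) s) :
    s = (a, j, false) ∨ s = (a + 1, j, false) ∨ s = (a, j + 1, false) := by
  obtain ⟨a', j', o'⟩ := s
  rcases h with ⟨h1, _, _⟩ | ⟨h1, h2, h3⟩
  · simp at h1
  · simp only at h1 h2
    subst h1
    rcases h3 with ⟨h, h'⟩ | ⟨h, h'⟩ | ⟨h, h'⟩ <;>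
      simp only [Prod.mk.injEq, and_true] at h h' ⊢ <;> omega

end Aux

lemma HBar_elim {B' : Finset ℤ} {t s : Tri} (h : (t, s) ∈ HBar (↑B' : Set ℤ)) :
    ∃ i, i ∈ B' ∧ ((t = (i - 1, 0, false) ∧ s = (i - 1, -1, true)) ∨
      (t = (i - 1, -1, true) ∧ s = (i - 1, 0, false))) := by
  obtain ⟨i, hi, hc⟩ := h
  refine ⟨i, hi, ?_⟩
  rcases hc with hc | hc <;> rw [Prod.ext_iff] at hc <;> tauto

lemma HBar_intro {B' : Finset ℤ} {i : ℤ} (hi : i ∈ B') :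
    ((((i : ℤ) - 1, (0 : ℤ), false), ((i : ℤ) - 1, (-1 : ℤ), true)) : Tri × Tri) ∈
      HBar (↑B' : Set ℤ) :=
  ⟨i, hi, Or.inl rfl⟩

lemma HR_rot {Nz hz : ℤ} {U' D' : Finset ℤ} (hD' : D' = mir Nz U') {t : Tri}
    (ht : t ∈ HRegion Nz hz hz ↑U' ↑D') :
    rot (Nz, 0) t ∈ HRegion Nz hz hz ↑U' ↑D' := by
  obtain ⟨a, j, o⟩ := t
  have hDiff : ∀ x : ℤ, x ∈ D' ↔ Nz + 1 - x ∈ U' := by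
    intro x; rw [hD', mem_mir]
  have hUiff : ∀ x : ℤ, x ∈ U' ↔ Nz + 1 - x ∈ D' := by
    intro x
    rw [hDiff]
    have : Nz + 1 - (Nz + 1 - x) = x := by ring
    rw [this]
  simp only [HRegion, Set.mem_setOf_eq, rot, Finset.mem_coe] at ht ⊢
  rcases ht with ⟨h1, h2, h3, h4, h5, h6⟩ | ⟨h1, h2, h3, h4, h5⟩ |
    ⟨h1, h2, h3, h4, h5⟩ | ⟨h1, h2, h3, h4, h5, h6⟩
  · subst h1
    refine Or.inr (Or.inr (Or.inr ⟨rfl, by omega, by omega, by omega, by omega, ?_⟩))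
    intro he hmem
    rw [hDiff] at hmem
    have hj : j = 0 := by omega
    have : Nz + 1 - (Nz - a - 1 + 1) = a + 1 := by ring
    rw [this] at hmem
    exact h6 hj hmem
  · subst h1
    exact Or.inr (Or.inr (Or.inl ⟨rfl, by omega, by omega, by omega, by omega⟩))
  · subst h1
    exact Or.inr (Or.inl ⟨rfl, by omega, by omega, by omega, by omega⟩)
  · subst h1
    refine Or.inl ⟨rfl, by omega, by omega, by omega, by omega, ?_⟩
    intro he hmem
    rw [hUiff] at hmem
    have hj : j = -1 := by omega
    have : Nz + 1 - (Nz - a - 1 + 1) = a + 1 := by ring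
    rw [this] at hmem
    exact h6 hj hmem

lemma HBar_rot {Nz : ℤ} {B' : Finset ℤ} (hB' : B' = mir Nz B') {t s : Tri}
    (h : (t, s) ∈ HBar (↑B' : Set ℤ)) :
    (rot (Nz, 0) s, rot (Nz, 0) t) ∈ HBar (↑B' : Set ℤ) := by
  obtain ⟨i, hi, hc⟩ := HBar_elim h
  have hi' : Nz + 1 - i ∈ B' := by
    rw [hB', mem_mir]
    have : Nz + 1 - (Nz + 1 - i) = i := by ring
    rwa [this]
  refine ⟨Nz + 1 - i, hi', ?_⟩
  rcases hc with ⟨rfl, rfl⟩ | ⟨rfl, rfl⟩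
  · refine Or.inl ?_
    simp only [rot, Prod.mk.injEq, Bool.not_true, Bool.not_false, and_true, true_and]
    omega
  · refine Or.inr ?_
    simp only [rot, Prod.mk.injEq, Bool.not_true, Bool.not_false, and_true, true_and]
    omega

lemma mem_HR_up {Nz hz a j : ℤ} {U' D' : Finset ℤ} (hj : 0 ≤ j) :
    ((a, j, false) : Tri) ∈ HRegion Nz hz hz ↑U' ↑D' ↔
      (j < hz ∧ 0 ≤ a ∧ a + j ≤ Nz - 1 ∧ (j = 0 → a + 1 ∉ U')) := by
  simp only [HRegion, Set.mem_setOf_eq, Finset.mem_coe]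
  constructor
  · rintro (⟨-, h2, h3, h4, h5, h6⟩ | ⟨h1, -⟩ | ⟨-, h2, h3, h4, h5⟩ | ⟨h1, -⟩)
    · exact ⟨h3, h4, h5, h6⟩
    · simp at h1
    · omega
    · simp at h1
  · rintro ⟨h3, h4, h5, h6⟩
    exact Or.inl ⟨trivial, hj, h3, h4, h5, h6⟩

lemma mem_HR_dn {Nz hz a j : ℤ} {U' D' : Finset ℤ} (hj : 0 ≤ j) :
    ((a, j, true) : Tri) ∈ HRegion Nz hz hz ↑U' ↑D' ↔
      (j < hz ∧ 0 ≤ a ∧ a + j ≤ Nz - 2) := by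
  simp only [HRegion, Set.mem_setOf_eq, Finset.mem_coe]
  constructor
  · rintro (⟨h1, -⟩ | ⟨-, h2, h3, h4, h5⟩ | ⟨h1, -⟩ | ⟨-, h2, h3, h4, h5, h6⟩)
    · simp at h1
    · exact ⟨h3, h4, h5⟩
    · simp at h1
    · omega
  · rintro ⟨h3, h4, h5⟩
    exact Or.inr (Or.inl ⟨trivial, hj, h3, h4, h5⟩)

lemma mem_HR_upneg {Nz hz a j : ℤ} {U' D' : Finset ℤ} (hj : j ≤ -1) :
    ((a, j, false) : Tri) ∈ HRegion Nz hz hz ↑U' ↑D' ↔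
      (-hz ≤ j ∧ -j ≤ a ∧ a ≤ Nz - 1) := by
  simp only [HRegion, Set.mem_setOf_eq, Finset.mem_coe]
  constructor
  · rintro (⟨-, h2, -⟩ | ⟨h1, -⟩ | ⟨-, h2, h3, h4, h5⟩ | ⟨h1, -⟩)
    · omega
    · simp at h1
    · exact ⟨h2, h4, h5⟩
    · simp at h1
  · rintro ⟨h2, h4, h5⟩
    exact Or.inr (Or.inr (Or.inl ⟨trivial, h2, hj, h4, h5⟩))

lemma mem_HR_dnneg {Nz hz a j : ℤ} {U' D' : Finset ℤ} (hj : j ≤ -1) :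
    ((a, j, true) : Tri) ∈ HRegion Nz hz hz ↑U' ↑D' ↔
      (-hz ≤ j ∧ -j - 1 ≤ a ∧ a ≤ Nz - 1 ∧ (j = -1 → a + 1 ∉ D')) := by
  simp only [HRegion, Set.mem_setOf_eq, Finset.mem_coe]
  constructor
  · rintro (⟨h1, -⟩ | ⟨-, h2, -⟩ | ⟨h1, -⟩ | ⟨-, h2, h3, h4, h5, h6⟩)
    · simp at h1
    · omega
    · simp at h1
    · exact ⟨h2, h4, h5, h6⟩
  · rintro ⟨h2, h4, h5, h6⟩
    exact Or.inr (Or.inr (Or.inr ⟨trivial, h2, hj, h4, h5, h6⟩))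

lemma mem_TR_up {az bz a j : ℤ} {S : Finset ℤ} :
    ((a, j, false) : Tri) ∈ TRegion az bz ↑S ↔
      (0 ≤ j ∧ j < az ∧ 0 ≤ a ∧ a + j ≤ az + bz - 1 ∧ (j = 0 → a + 1 ∉ S)) := by
  simp only [TRegion, Set.mem_setOf_eq, Finset.mem_coe]
  constructor
  · rintro (⟨-, h2, h3, h4, h5, h6⟩ | ⟨h1, -⟩)
    · exact ⟨h2, h3, h4, h5, h6⟩
    · simp at h1
  · rintro ⟨h2, h3, h4, h5, h6⟩
    exact Or.inl ⟨trivial, h2, h3, h4, h5, h6⟩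

lemma mem_TR_dn {az bz a j : ℤ} {S : Finset ℤ} :
    ((a, j, true) : Tri) ∈ TRegion az bz ↑S ↔
      (0 ≤ j ∧ j < az ∧ 0 ≤ a ∧ a + j ≤ az + bz - 2) := by
  simp only [TRegion, Set.mem_setOf_eq, Finset.mem_coe]
  constructor
  · rintro (⟨h1, -⟩ | ⟨-, h2, h3, h4, h5⟩)
    · simp at h1
    · exact ⟨h2, h3, h4, h5⟩
  · rintro ⟨h2, h3, h4, h5⟩
    exact Or.inr ⟨trivial, h2, h3, h4, h5⟩

lemma TR_row_nonneg {az bz : ℤ} {S : Finset ℤ} {t : Tri} (ht : t ∈ TRegion az bz ↑S) :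
    0 ≤ t.2.1 := by
  rcases ht with ⟨-, h, -⟩ | ⟨-, h, -⟩ <;> exact h

lemma forcing {Nz hz : ℤ} {U' D' B' : Finset ℤ}
    (hU'N : U' ⊆ Finset.Icc 1 Nz)
    (hcard : hz = ((Finset.Icc 1 Nz \ (U' ∪ D' ∪ B')).card : ℤ) + U'.card)
    (hzN : hz ≤ Nz)
    {f : Tri → Tri} (hf : IsTiling (HRegion Nz hz hz ↑U' ↑D') (HBar ↑B') f) :
    ∀ i ∈ Finset.Icc 1 Nz \ (U' ∪ D' ∪ B'), f (i - 1, 0, false) = (i - 1, -1, true) := by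
  classical
  intro i hi
  set Oc := Finset.Icc 1 Nz \ (U' ∪ D' ∪ B') with hOc
  have h0z : (0 : ℤ) < hz := by
    have h1 : 1 ≤ Oc.card := Finset.card_pos.mpr ⟨i, hi⟩
    omega
  set U0 : Finset Tri :=
    (Finset.Icc 0 (hz - 1)).biUnion
      (fun j => (Finset.Icc 0 (Nz - 1 - j)).image (fun a => ((a, j, false) : Tri))) with hU0
  set dent : Finset Tri := U'.image (fun i => ((i - 1, 0, false) : Tri)) with hdent
  set UpF : Finset Tri := U0 \ dent with hUpF
  set DnF : Finset Tri :=
    (Finset.Icc 0 (hz - 1)).biUnion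
      (fun j => (Finset.Icc 0 (Nz - 2 - j)).image (fun a => ((a, j, true) : Tri))) with hDnF
  have memU0 : ∀ (a j : ℤ) (o : Bool), ((a, j, o) : Tri) ∈ U0 ↔
      (o = false ∧ 0 ≤ j ∧ j < hz ∧ 0 ≤ a ∧ a + j ≤ Nz - 1) := by
    intro a j o
    simp only [hU0, Finset.mem_biUnion, Finset.mem_image, Finset.mem_Icc, Prod.mk.injEq]
    constructor
    · rintro ⟨j', hj', a', ha', rfl, rfl, rfl⟩
      exact ⟨rfl, by omega, by omega, by omega, by omega⟩
    · rintro ⟨rfl, h⟩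
      exact ⟨j, by omega, a, by omega, rfl, rfl, rfl⟩
  have memDn : ∀ (a j : ℤ) (o : Bool), ((a, j, o) : Tri) ∈ DnF ↔
      (o = true ∧ 0 ≤ j ∧ j < hz ∧ 0 ≤ a ∧ a + j ≤ Nz - 2) := by
    intro a j o
    simp only [hDnF, Finset.mem_biUnion, Finset.mem_image, Finset.mem_Icc, Prod.mk.injEq]
    constructor
    · rintro ⟨j', hj', a', ha', rfl, rfl, rfl⟩
      exact ⟨rfl, by omega, by omega, by omega, by omega⟩
    · rintro ⟨rfl, h⟩
      exact ⟨j, by omega, a, by omega, rfl, rfl, rfl⟩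
  have memUp : ∀ (a j : ℤ) (o : Bool), ((a, j, o) : Tri) ∈ UpF ↔
      (o = false ∧ 0 ≤ j ∧ j < hz ∧ 0 ≤ a ∧ a + j ≤ Nz - 1 ∧ (j = 0 → a + 1 ∉ U')) := by
    intro a j o
    rw [hUpF, Finset.mem_sdiff, memU0]
    simp only [hdent, Finset.mem_image, Prod.mk.injEq, not_exists]
    constructor
    · rintro ⟨⟨rfl, h1, h2, h3, h4⟩, hnd⟩
      refine ⟨rfl, h1, h2, h3, h4, fun hj0 hmem => hnd (a + 1) ⟨hmem, by omega, by omega, rfl⟩⟩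
    · rintro ⟨rfl, h1, h2, h3, h4, h5⟩
      refine ⟨⟨rfl, h1, h2, h3, h4⟩, ?_⟩
      rintro x ⟨hx, hx1, hx2, -⟩
      exact h5 (by omega) (by rw [show a + 1 = x by omega]; exact hx)
  have upHR : ∀ t ∈ UpF, t ∈ HRegion Nz hz hz (↑U' : Set ℤ) ↑D' := by
    rintro ⟨a, j, o⟩ ht
    rw [memUp] at ht
    obtain ⟨rfl, h1, h2, h3, h4, h5⟩ := ht
    rw [mem_HR_up h1]
    exact ⟨h2, h3, h4, h5⟩
  have dnHR : ∀ t ∈ DnF, t ∈ HRegion Nz hz hz (↑U' : Set ℤ) ↑D' := by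
    rintro ⟨a, j, o⟩ ht
    rw [memDn] at ht
    obtain ⟨rfl, h1, h2, h3, h4⟩ := ht
    rw [mem_HR_dn h1]
    exact ⟨h2, h3, h4⟩
  obtain ⟨hfout, hfmem⟩ := hf
  set Vt := UpF.filter (fun t => (f t).2.1 < 0) with hVt
  have hVtsub : Vt ⊆ UpF := Finset.filter_subset _ _
  have mapUD : ∀ t ∈ UpF \ Vt, f t ∈ DnF := by
    rintro ⟨a, j, o⟩ ht
    rw [Finset.mem_sdiff] at ht
    obtain ⟨htU, htV⟩ := ht
    have hpos : ¬ ((f (a, j, o)).2.1 < 0) := fun hneg => htV (Finset.mem_filter.mpr ⟨htU, hneg⟩)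
    have hup := memUp a j o
    rw [hup] at htU
    obtain ⟨rfl, h1, h2, h3, h4, h5⟩ := htU
    have hHR := upHR _ ((memUp a j false).mpr ⟨rfl, h1, h2, h3, h4, h5⟩)
    obtain ⟨hfmem1, hadj, hff, hbar1, hbar2⟩ := hfmem _ hHR
    rcases adj_up_cases hadj with he | he | he <;> rw [he] <;> rw [he] at hfmem1 hpos
    · rw [mem_HR_dn h1] at hfmem1
      rw [memDn]
      exact ⟨rfl, h1, hfmem1.1, hfmem1.2.1, hfmem1.2.2⟩
    · rw [mem_HR_dn h1] at hfmem1
      rw [memDn]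
      exact ⟨rfl, h1, hfmem1.1, hfmem1.2.1, hfmem1.2.2⟩
    · have hj1 : 0 ≤ j - 1 := by simp only at hpos; omega
      rw [mem_HR_dn hj1] at hfmem1
      rw [memDn]
      exact ⟨rfl, hj1, hfmem1.1, hfmem1.2.1, hfmem1.2.2⟩
  have mapDU : ∀ s ∈ DnF, f s ∈ UpF \ Vt := by
    rintro ⟨a, j, o⟩ hs
    have hdn := memDn a j o
    rw [hdn] at hs
    obtain ⟨rfl, h1, h2, h3, h4⟩ := hs
    have hHR := dnHR _ ((memDn a j true).mpr ⟨rfl, h1, h2, h3, h4⟩)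
    obtain ⟨hfmem1, hadj, hff, hbar1, hbar2⟩ := hfmem _ hHR
    have hUpmem : f (a, j, true) ∈ UpF := by
      rcases adj_down_cases hadj with he | he | he <;> rw [he] <;> rw [he] at hfmem1
      · rw [mem_HR_up h1] at hfmem1
        rw [memUp]
        exact ⟨rfl, h1, hfmem1.1, hfmem1.2.1, hfmem1.2.2.1, hfmem1.2.2.2⟩
      · rw [mem_HR_up h1] at hfmem1
        rw [memUp]
        exact ⟨rfl, h1, hfmem1.1, hfmem1.2.1, hfmem1.2.2.1, hfmem1.2.2.2⟩
      · have hj1 : (0 : ℤ) ≤ j + 1 := by omega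
        rw [mem_HR_up hj1] at hfmem1
        rw [memUp]
        exact ⟨rfl, hj1, hfmem1.1, hfmem1.2.1, hfmem1.2.2.1, hfmem1.2.2.2⟩
    rw [Finset.mem_sdiff]
    refine ⟨hUpmem, fun hmem => ?_⟩
    have := (Finset.mem_filter.mp hmem).2
    rw [hff] at this
    simp only at this
    omega
  have hinv1 : ∀ t ∈ UpF \ Vt, f (f t) = t := by
    intro t ht
    exact (hfmem t (upHR t ((Finset.mem_sdiff.mp ht).1))).2.2.1
  have hinv2 : ∀ s ∈ DnF, f (f s) = s := by
    intro s hs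
    exact (hfmem s (dnHR s hs)).2.2.1
  have hcardeq : (UpF \ Vt).card = DnF.card := by
    refine Finset.card_bij' (fun t _ => f t) (fun s _ => f s) mapUD mapDU ?_ ?_
    · intro t ht
      exact hinv1 t ht
    · intro s hs
      exact hinv2 s hs
  have injpair : ∀ x y : ℤ, ((x - 1, (0:ℤ), false) : Tri) = (y - 1, (0:ℤ), false) → x = y := by
    intro x y h
    simp only [Prod.mk.injEq] at h
    omega
  have cdent : dent.card = U'.card := by
    rw [hdent]
    exact Finset.card_image_of_injective _ (fun x y h => injpair x y h)
  have hdentsub : dent ⊆ U0 := by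
    rintro t ht
    rw [hdent, Finset.mem_image] at ht
    obtain ⟨x, hx, rfl⟩ := ht
    have hx' := hU'N hx
    rw [Finset.mem_Icc] at hx'
    rw [memU0]
    exact ⟨rfl, by omega, by omega, by omega, by omega⟩
  have cU0 : (U0.card : ℤ) = ∑ j ∈ Finset.Icc 0 (hz - 1), (Nz - j) := by
    rw [hU0, Finset.card_biUnion]
    · push_cast
      refine Finset.sum_congr rfl ?_
      intro j hj
      rw [Finset.mem_Icc] at hj
      rw [Finset.card_image_of_injective _
        (fun x y h => by simpa using (Prod.mk.injEq _ _ _ _).mp h |>.1), Int.card_Icc]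
      omega
    · intro x hx y hy hxy
      simp only [Finset.disjoint_left, Finset.mem_image]
      rintro t ⟨a, ha, rfl⟩ ⟨b, hb, hab⟩
      simp only [Prod.mk.injEq] at hab
      exact hxy (by omega)
  have cDnF : (DnF.card : ℤ) = ∑ j ∈ Finset.Icc 0 (hz - 1), (Nz - 1 - j) := by
    rw [hDnF, Finset.card_biUnion]
    · push_cast
      refine Finset.sum_congr rfl ?_
      intro j hj
      rw [Finset.mem_Icc] at hj
      rw [Finset.card_image_of_injective _
        (fun x y h => by simpa using (Prod.mk.injEq _ _ _ _).mp h |>.1), Int.card_Icc]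
      omega
    · intro x hx y hy hxy
      simp only [Finset.disjoint_left, Finset.mem_image]
      rintro t ⟨a, ha, rfl⟩ ⟨b, hb, hab⟩
      simp only [Prod.mk.injEq] at hab
      exact hxy (by omega)
  have cdiff : (U0.card : ℤ) - DnF.card = hz := by
    rw [cU0, cDnF, ← Finset.sum_sub_distrib]
    rw [Finset.sum_congr rfl (fun j _ => by ring_nf : ∀ j ∈ Finset.Icc 0 (hz-1),
      Nz - j - (Nz - 1 - j) = 1)]
    rw [Finset.sum_const, Int.card_Icc, nsmul_eq_mul, mul_one]
    omega
  have cUp : (UpF.card : ℤ) = (U0.card : ℤ) - U'.card := by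
    have hle := Finset.card_le_card hdentsub
    rw [hUpF, Finset.card_sdiff_of_subset hdentsub]
    omega
  have cVt : (Vt.card : ℤ) = (Oc.card : ℤ) := by
    have h1 : (UpF \ Vt).card = UpF.card - Vt.card := Finset.card_sdiff_of_subset hVtsub
    have hle := Finset.card_le_card hVtsub
    omega
  have himg : (Oc.image (fun i => ((i - 1, 0, false) : Tri))).card = Oc.card :=
    Finset.card_image_of_injective _ (fun x y h => injpair x y h)
  have hVtOc : Vt ⊆ Oc.image (fun i => ((i - 1, 0, false) : Tri)) := by
    rintro ⟨a, j, o⟩ ht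
    rw [hVt, Finset.mem_filter] at ht
    obtain ⟨htU, hneg⟩ := ht
    rw [memUp] at htU
    obtain ⟨rfl, h1, h2, h3, h4, h5⟩ := htU
    have hHR := upHR _ ((memUp a j false).mpr ⟨rfl, h1, h2, h3, h4, h5⟩)
    obtain ⟨hfmem1, hadj, hff, hbar1, hbar2⟩ := hfmem _ hHR
    rcases adj_up_cases hadj with he | he | he <;> rw [he] at hfmem1 hneg
    · rw [mem_HR_dn h1] at hfmem1
      simp only at hneg
      omega
    · rw [mem_HR_dn h1] at hfmem1
      simp only at hneg
      omega
    · simp only at hneg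
      have hj0 : j = 0 := by omega
      subst hj0
      rw [mem_HR_dnneg (by omega)] at hfmem1
      have hD : a + 1 ∉ D' := hfmem1.2.2.2 (by norm_num)
      have hU : a + 1 ∉ U' := h5 rfl
      have hB : a + 1 ∉ B' := by
        intro hB
        apply hbar1
        rw [he]
        have h01 : (0 : ℤ) - 1 = -1 := by norm_num
        rw [h01]
        have heq : ((a, (0:ℤ), false), (a, (-1:ℤ), true)) =
            (((a+1) - 1, (0:ℤ), false), ((a+1) - 1, (-1:ℤ), true)) := by norm_num
        rw [heq]
        exact HBar_intro hB
      rw [Finset.mem_image]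
      refine ⟨a + 1, ?_, by norm_num⟩
      rw [hOc, Finset.mem_sdiff, Finset.mem_Icc]
      simp only [Finset.mem_union]
      exact ⟨⟨by omega, by omega⟩, by tauto⟩
  have hVeq : Vt = Oc.image (fun i => ((i - 1, 0, false) : Tri)) :=
    Finset.eq_of_subset_of_card_le hVtOc (by omega)
  have hiV : ((i - 1, 0, false) : Tri) ∈ Vt := by
    rw [hVeq, Finset.mem_image]
    exact ⟨i, hi, rfl⟩
  rw [hVt, Finset.mem_filter] at hiV
  obtain ⟨htU, hneg⟩ := hiV
  rw [memUp] at htU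
  obtain ⟨-, h1, h2, h3, h4, h5⟩ := htU
  have hHR := upHR _ ((memUp (i - 1) 0 false).mpr ⟨rfl, h1, h2, h3, h4, h5⟩)
  obtain ⟨hfmem1, hadj, hff, hbar1, hbar2⟩ := hfmem _ hHR
  rcases adj_up_cases hadj with he | he | he <;> rw [he] at hneg ⊢
  · simp only at hneg; omega
  · simp only at hneg; omega
  · norm_num

lemma core {Nz hz : ℤ} {U' D' B' : Finset ℤ}
    (hU'N : U' ⊆ Finset.Icc 1 Nz)
    (hD' : D' = mir Nz U')
    (hB' : B' = mir Nz B')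
    (hcard : hz = ((Finset.Icc 1 Nz \ (U' ∪ D' ∪ B')).card : ℤ) + U'.card)
    (hzN : hz ≤ Nz) :
    Mc (Nz, 0) (HRegion Nz hz hz ↑U' ↑D') (HBar ↑B') =
      M (TRegion hz (Nz - hz) ↑((Finset.Icc 1 Nz \ (U' ∪ D' ∪ B')) ∪ U')) ∅ := by
  classical
  set Oc := Finset.Icc 1 Nz \ (U' ∪ D' ∪ B') with hOc
  set HR := HRegion Nz hz hz (↑U' : Set ℤ) (↑D' : Set ℤ) with hHRdef
  set TR := TRegion hz (Nz - hz) (↑(Oc ∪ U') : Set ℤ) with hTRdef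
  set rc : Tri → Tri := rot (Nz, 0) with hrcdef
  have hrcrc : ∀ t, rc (rc t) = t := fun t => rot_rot _ t
  have hrcHR : ∀ {t}, t ∈ HR → rc t ∈ HR := fun h => HR_rot hD' h
  have hrcHR' : ∀ {t}, rc t ∈ HR → t ∈ HR := by
    intro t h
    have := HR_rot hD' h
    rw [← hrcdef] at this
    rwa [hrcrc] at this
  have hUiff : ∀ x : ℤ, x ∈ U' ↔ Nz + 1 - x ∈ D' := by
    intro x
    rw [hD', mem_mir]
    have : Nz + 1 - (Nz + 1 - x) = x := by ring
    rw [this]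
  have hDiff : ∀ x : ℤ, x ∈ D' ↔ Nz + 1 - x ∈ U' := by
    intro x; rw [hD', mem_mir]
  have hBiff : ∀ x : ℤ, x ∈ B' ↔ Nz + 1 - x ∈ B' := by
    intro x
    constructor
    · intro h
      rw [hB', mem_mir]
      have : Nz + 1 - (Nz + 1 - x) = x := by ring
      rwa [this]
    · intro h
      rw [hB', mem_mir] at h
      rwa [show Nz + 1 - (Nz + 1 - x) = x by ring] at h
  have hOcm : ∀ x : ℤ, x ∈ Oc → Nz + 1 - x ∈ Oc := by
    intro x hx
    rw [hOc, Finset.mem_sdiff, Finset.mem_Icc] at hx ⊢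
    simp only [Finset.mem_union] at hx ⊢
    obtain ⟨⟨hx1, hx2⟩, hx3⟩ := hx
    refine ⟨⟨by omega, by omega⟩, ?_⟩
    rintro ((h | h) | h)
    · rw [hUiff, show Nz + 1 - (Nz + 1 - x) = x by ring] at h
      exact hx3 (Or.inl (Or.inr h))
    · rw [hDiff, show Nz + 1 - (Nz + 1 - x) = x by ring] at h
      exact hx3 (Or.inl (Or.inl h))
    · rw [hBiff, show Nz + 1 - (Nz + 1 - x) = x by ring] at h
      exact hx3 (Or.inr h)
  have hTRHR : ∀ {t}, t ∈ TR → t ∈ HR := by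
    rintro ⟨a, j, o⟩ ht
    cases o with
    | false =>
      rw [hTRdef, mem_TR_up] at ht
      obtain ⟨h1, h2, h3, h4, h5⟩ := ht
      rw [hHRdef, mem_HR_up h1]
      refine ⟨h2, h3, by omega, fun hj hm => h5 hj (Finset.mem_union_right _ hm)⟩
    | true =>
      rw [hTRdef, mem_TR_dn] at ht
      obtain ⟨h1, h2, h3, h4⟩ := ht
      rw [hHRdef, mem_HR_dn h1]
      exact ⟨h2, h3, by omega⟩
  have hrcrow : ∀ t : Tri, (rc t).2.1 = -t.2.1 - 1 := by
    intro t; simp [hrcdef, rot]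
  have hrcTR_neg : ∀ {t}, t ∈ TR → rc t ∉ TR := by
    intro t ht hc
    have h1 := TR_row_nonneg ht
    have h2 := TR_row_nonneg hc
    rw [hrcrow] at h2
    omega
  have noBar : ∀ {p q : Tri}, 0 ≤ p.2.1 → 0 ≤ q.2.1 → (p, q) ∉ HBar (↑B' : Set ℤ) := by
    intro p q hp hq hmem
    obtain ⟨i, hi, hc⟩ := HBar_elim hmem
    rcases hc with ⟨rfl, rfl⟩ | ⟨rfl, rfl⟩ <;> simp only at hp hq <;> omega
  have noBarNeg : ∀ {p q : Tri}, p.2.1 ≤ -1 → q.2.1 ≤ -1 → (p, q) ∉ HBar (↑B' : Set ℤ) := by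
    intro p q hp hq hmem
    obtain ⟨i, hi, hc⟩ := HBar_elim hmem
    rcases hc with ⟨rfl, rfl⟩ | ⟨rfl, rfl⟩ <;> simp only at hp hq <;> omega
  -- characterization of the "vertical zone"
  have hzone : ∀ {a j : ℤ} {o : Bool}, ((a, j, o) : Tri) ∈ HR → ((a, j, o) : Tri) ∉ TR →
      rc (a, j, o) ∉ TR →
      (o = false ∧ j = 0 ∧ a + 1 ∈ Oc) ∨ (o = true ∧ j = -1 ∧ a + 1 ∈ Oc) := by
    intro a j o ht hnt hnr
    have hrceq : ∀ (oo : Bool), rc (a, j, oo) = (Nz - a - 1, 0 - j - 1, !oo) := fun _ => rfl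
    cases o with
    | false =>
      by_cases hj : 0 ≤ j
      · rw [hHRdef, mem_HR_up hj] at ht
        obtain ⟨h1, h2, h3, h4⟩ := ht
        left
        rw [hTRdef, mem_TR_up] at hnt
        push_neg at hnt
        obtain ⟨hj0, hS⟩ := hnt hj h1 h2 (by omega)
        refine ⟨rfl, hj0, ?_⟩
        rcases Finset.mem_union.mp hS with h | h
        · exact h
        · exact absurd h (h4 hj0)
      · exfalso
        apply hnr
        rw [hHRdef, mem_HR_upneg (by omega)] at ht
        obtain ⟨h1, h2, h3⟩ := ht
        rw [hrceq, hTRdef]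
        have : (!false) = true := rfl
        rw [this, mem_TR_dn]
        refine ⟨by omega, by omega, by omega, by omega⟩
    | true =>
      by_cases hj : 0 ≤ j
      · exfalso
        apply hnt
        rw [hHRdef, mem_HR_dn hj] at ht
        obtain ⟨h1, h2, h3⟩ := ht
        rw [hTRdef, mem_TR_dn]
        exact ⟨hj, h1, h2, by omega⟩
      · right
        rw [hHRdef, mem_HR_dnneg (by omega)] at ht
        obtain ⟨h1, h2, h3, h4⟩ := ht
        rw [hrceq] at hnr
        have : (!true) = false := rfl
        rw [this] at hnr
        rw [hTRdef, mem_TR_up] at hnr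
        push_neg at hnr
        obtain ⟨hj0, hS⟩ := hnr (by omega) (by omega) (by omega) (by omega)
        have hjm1 : j = -1 := by omega
        subst hjm1
        refine ⟨rfl, rfl, ?_⟩
        rcases Finset.mem_union.mp hS with h | h
        · have := hOcm _ h
          rwa [show Nz + 1 - (Nz - a - 1 + 1) = a + 1 by ring] at this
        · exfalso
          apply h4 rfl
          rw [hUiff] at h
          rwa [show Nz + 1 - (Nz - a - 1 + 1) = a + 1 by ring] at h
  have h1z : ∀ {x : ℤ}, x ∈ Oc → 1 ≤ hz := by
    intro x hx
    have : 1 ≤ Oc.card := Finset.card_pos.mpr ⟨x, hx⟩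
    omega
  have hOcIcc : ∀ {x : ℤ}, x ∈ Oc → (1 ≤ x ∧ x ≤ Nz ∧ x ∉ U' ∧ x ∉ D' ∧ x ∉ B') := by
    intro x hx
    rw [hOc, Finset.mem_sdiff, Finset.mem_Icc] at hx
    simp only [Finset.mem_union] at hx
    tauto
  have fwd : ∀ (f : Tri → Tri), IsTiling HR (HBar ↑B') f →
      (∀ t ∈ TR, f t ∈ TR) := by
    intro f hf
    have hforce := forcing hU'N hcard hzN hf
    obtain ⟨hfout, hfmem⟩ := hf
    rintro ⟨a, j, o⟩ ht
    have htHR := hTRHR ht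
    obtain ⟨hm1, hadj, hff, hb1, hb2⟩ := hfmem _ htHR
    cases o with
    | false =>
      rw [hTRdef, mem_TR_up] at ht
      obtain ⟨h1, h2, h3, h4, h5⟩ := ht
      rcases adj_up_cases hadj with he | he | he <;> rw [he] at hm1 hb1 ⊢
      · rw [hHRdef, mem_HR_dn h1] at hm1
        rw [hTRdef, mem_TR_dn]
        exact ⟨h1, hm1.1, hm1.2.1, by omega⟩
      · rw [hHRdef, mem_HR_dn h1] at hm1
        rw [hTRdef, mem_TR_dn]
        exact ⟨h1, hm1.1, hm1.2.1, by omega⟩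
      · by_cases hj0 : 0 ≤ j - 1
        · rw [hHRdef, mem_HR_dn hj0] at hm1
          rw [hTRdef, mem_TR_dn]
          exact ⟨hj0, hm1.1, hm1.2.1, by omega⟩
        · exfalso
          have hj : j = 0 := by omega
          subst hj
          rw [hHRdef, mem_HR_dnneg (by omega)] at hm1
          have hU : a + 1 ∉ U' := fun hc => h5 rfl (Finset.mem_union_right _ hc)
          have hOcmem : a + 1 ∉ Oc := fun hc => h5 rfl (Finset.mem_union_left _ hc)
          have hD : a + 1 ∉ D' := hm1.2.2.2 (by norm_num)
          have hB : a + 1 ∉ B' := by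
            intro hB
            apply hb1
            have heq : ((a, (0:ℤ), false), (a, (0:ℤ) - 1, true)) =
                (((a+1) - 1, (0:ℤ), false), ((a+1) - 1, (-1:ℤ), true)) := by norm_num
            rw [heq]
            exact HBar_intro hB
          apply hOcmem
          rw [hOc, Finset.mem_sdiff, Finset.mem_Icc]
          simp only [Finset.mem_union]
          exact ⟨⟨by omega, by omega⟩, by tauto⟩
    | true =>
      rw [hTRdef, mem_TR_dn] at ht
      obtain ⟨h1, h2, h3, h4⟩ := ht
      have keyrow0 : ∀ p : ℤ, f (a, j, true) = (p - 1, 0, false) → p - 1 + 1 ∉ Oc ∪ U' := by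
        intro p he hc
        rcases Finset.mem_union.mp hc with hcc | hcc
        · have hfc := hforce _ hcc
          rw [show (p - 1 + 1 : ℤ) - 1 = p - 1 by ring] at hfc
          rw [← he, hff] at hfc
          simp only [Prod.mk.injEq] at hfc
          omega
        · rw [he, hHRdef] at hm1
          by_cases hj0 : (0:ℤ) ≤ 0
          · rw [mem_HR_up hj0] at hm1
            exact hm1.2.2.2 rfl (by rwa [show (p:ℤ) - 1 + 1 = p by ring] at hcc ⊢)
          · omega
      rcases adj_down_cases hadj with he | he | he <;> rw [he] at hm1 ⊢
      · by_cases hj1 : 1 ≤ j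
        · rw [hHRdef, mem_HR_up (by omega)] at hm1
          rw [hTRdef, mem_TR_up]
          exact ⟨by omega, hm1.1, hm1.2.1, by omega, fun hc => absurd hc (by omega)⟩
        · have hj0 : j = 0 := by omega
          subst hj0
          rw [hHRdef, mem_HR_up (by omega)] at hm1
          rw [hTRdef, mem_TR_up]
          refine ⟨le_refl 0, hm1.1, hm1.2.1, by omega, fun _ => ?_⟩
          have := keyrow0 (a + 1) (by rw [he]; norm_num)
          rwa [show (a:ℤ) + 1 - 1 + 1 = a + 1 by ring] at this
      · by_cases hj1 : 1 ≤ j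
        · rw [hHRdef, mem_HR_up (by omega)] at hm1
          rw [hTRdef, mem_TR_up]
          exact ⟨by omega, hm1.1, hm1.2.1, by omega, fun hc => absurd hc (by omega)⟩
        · have hj0 : j = 0 := by omega
          subst hj0
          rw [hHRdef, mem_HR_up (by omega)] at hm1
          rw [hTRdef, mem_TR_up]
          refine ⟨le_refl 0, hm1.1, hm1.2.1, by omega, fun _ => ?_⟩
          have := keyrow0 (a + 2) (by rw [he, show (a:ℤ) + 2 - 1 = a + 1 by ring])
          rwa [show (a:ℤ) + 2 - 1 + 1 = a + 1 + 1 by ring] at this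
      · rw [hHRdef, mem_HR_up (by omega)] at hm1
        rw [hTRdef, mem_TR_up]
        exact ⟨by omega, hm1.1, hm1.2.1, by omega, fun hc => absurd hc (by omega)⟩
  have hadjrc : ∀ p q : Tri, adj p q → adj (rc p) (rc q) := by
    intro p q h
    rw [hrcdef]
    exact (adj_rot _ _ _).mpr h
  have hbarrc : ∀ p q : Tri, (p, q) ∈ HBar (↑B' : Set ℤ) → (rc q, rc p) ∈ HBar (↑B' : Set ℤ) := by
    intro p q h
    rw [hrcdef]
    exact HBar_rot hB' h
  set vfl : Tri → Tri := fun t => (t.1, if t.2.2 = true then 0 else -1, !t.2.2) with hvfl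
  have hvfl_up : ∀ a : ℤ, vfl (a, 0, false) = (a, -1, true) := fun a => rfl
  have hvfl_dn : ∀ a : ℤ, vfl (a, -1, true) = (a, 0, false) := fun a => rfl
  set recon : (Tri → Tri) → Tri → Tri := fun g t =>
    if t ∈ TR then g t else if rc t ∈ TR then rc (g (rc t)) else if t ∈ HR then vfl t else t
    with hrecon
  have hrg : ∀ (g : Tri → Tri) (t : Tri), t ∈ TR → recon g t = g t := by
    intro g t ht
    rw [hrecon]
    simp only
    rw [if_pos ht]
  have hrg2 : ∀ (g : Tri → Tri) (t : Tri), t ∉ TR → rc t ∈ TR → recon g t = rc (g (rc t)) := by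
    intro g t h1 h2
    rw [hrecon]
    simp only
    rw [if_neg h1, if_pos h2]
  have hrg3 : ∀ (g : Tri → Tri) (t : Tri), t ∉ TR → rc t ∉ TR → t ∈ HR →
      recon g t = vfl t := by
    intro g t h1 h2 h3
    rw [hrecon]
    simp only
    rw [if_neg h1, if_neg h2, if_pos h3]
  have hrg4 : ∀ (g : Tri → Tri) (t : Tri), t ∉ HR → recon g t = t := by
    intro g t h
    have h1 : t ∉ TR := fun hc => h (hTRHR hc)
    have h2 : rc t ∉ TR := fun hc => h (hrcHR' (hTRHR hc))
    rw [hrecon]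
    simp only
    rw [if_neg h1, if_neg h2, if_neg h]
  -- membership facts for the vertical zone
  have zoneUpHR : ∀ a : ℤ, a + 1 ∈ Oc → ((a, 0, false) : Tri) ∈ HR := by
    intro a hmem
    obtain ⟨hOc1, hOc2, hOcU, hOcD, hOcB⟩ := hOcIcc hmem
    rw [hHRdef, mem_HR_up (le_refl 0)]
    exact ⟨h1z hmem, by omega, by omega, fun _ => hOcU⟩
  have zoneDnHR : ∀ a : ℤ, a + 1 ∈ Oc → ((a, -1, true) : Tri) ∈ HR := by
    intro a hmem
    obtain ⟨hOc1, hOc2, hOcU, hOcD, hOcB⟩ := hOcIcc hmem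
    rw [hHRdef, mem_HR_dnneg (by norm_num)]
    have := h1z hmem
    exact ⟨by omega, by omega, by omega, fun _ => hOcD⟩
  have zoneUpTR : ∀ a : ℤ, a + 1 ∈ Oc → ((a, 0, false) : Tri) ∉ TR := by
    intro a hmem hc
    rw [hTRdef, mem_TR_up] at hc
    exact hc.2.2.2.2 rfl (Finset.mem_union_left _ hmem)
  have zoneDnTR : ∀ a : ℤ, ((a, -1, true) : Tri) ∉ TR := by
    intro a hc
    have := TR_row_nonneg hc
    norm_num at this
  have hrc_up : ∀ a : ℤ, rc ((a, 0, false) : Tri) = (Nz - a - 1, -1, true) := by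
    intro a
    rw [hrcdef]
    unfold rot
    norm_num
  have hrc_dn : ∀ a : ℤ, rc ((a, -1, true) : Tri) = (Nz - a - 1, 0, false) := by
    intro a
    rw [hrcdef]
    unfold rot
    norm_num
  have hOcm' : ∀ a : ℤ, a + 1 ∈ Oc → Nz - a - 1 + 1 ∈ Oc := by
    intro a hmem
    have := hOcm _ hmem
    rwa [show Nz + 1 - (a + 1) = Nz - a - 1 + 1 by ring] at this
  have zoneBar : ∀ a : ℤ, a + 1 ∈ Oc →
      (((a, 0, false) : Tri), ((a, -1, true) : Tri)) ∉ HBar (↑B' : Set ℤ) := by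
    intro a hmem hc
    obtain ⟨hOc1, hOc2, hOcU, hOcD, hOcB⟩ := hOcIcc hmem
    obtain ⟨i, hib, hcc⟩ := HBar_elim hc
    rcases hcc with ⟨hq1, -⟩ | ⟨hq1, -⟩ <;> simp only [Prod.mk.injEq] at hq1
    · exact hOcB (by rwa [show i = a + 1 by omega] at hib)
    · exact absurd hq1.2.1 (by norm_num)
  have zoneBar' : ∀ a : ℤ, a + 1 ∈ Oc →
      (((a, -1, true) : Tri), ((a, 0, false) : Tri)) ∉ HBar (↑B' : Set ℤ) := by
    intro a hmem hc
    obtain ⟨hOc1, hOc2, hOcU, hOcD, hOcB⟩ := hOcIcc hmem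
    obtain ⟨i, hib, hcc⟩ := HBar_elim hc
    rcases hcc with ⟨hq1, -⟩ | ⟨hq1, -⟩ <;> simp only [Prod.mk.injEq] at hq1
    · exact absurd hq1.2.1 (by norm_num)
    · exact hOcB (by rwa [show i = a + 1 by omega] at hib)
  have bwdT : ∀ (g : Tri → Tri), IsTiling TR ∅ g → IsTiling HR (HBar ↑B') (recon g) := by
    intro g hg
    obtain ⟨hgout, hgmem⟩ := hg
    refine ⟨hrg4 g, ?_⟩
    intro t ht
    by_cases h1 : t ∈ TR
    · obtain ⟨hgm, hadj, hgg, -, -⟩ := hgmem t h1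
      rw [hrg g t h1]
      refine ⟨hTRHR hgm, hadj, ?_, noBar (TR_row_nonneg h1) (TR_row_nonneg hgm),
        noBar (TR_row_nonneg hgm) (TR_row_nonneg h1)⟩
      rw [hrg g _ hgm]
      exact hgg
    · by_cases h2 : rc t ∈ TR
      · obtain ⟨hgm, hadj, hgg, -, -⟩ := hgmem _ h2
        rw [hrg2 g t h1 h2]
        refine ⟨hrcHR (hTRHR hgm), ?_, ?_, ?_, ?_⟩
        · have := hadjrc _ _ hadj
          rwa [hrcrc] at this
        · rw [hrg2 g _ (hrcTR_neg hgm) (by rw [hrcrc]; exact hgm), hrcrc, hgg, hrcrc]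
        · intro hc
          have := hbarrc _ _ hc
          rw [hrcrc] at this
          exact noBar (TR_row_nonneg hgm) (TR_row_nonneg h2) this
        · intro hc
          have := hbarrc _ _ hc
          rw [hrcrc] at this
          exact noBar (TR_row_nonneg h2) (TR_row_nonneg hgm) this
      · obtain ⟨a, j, o⟩ := t
        rcases hzone ht h1 h2 with ⟨ho, hj, hmem⟩ | ⟨ho, hj, hmem⟩ <;> subst ho <;> subst hj
        · rw [hrg3 g _ h1 h2 ht, hvfl_up]
          refine ⟨zoneDnHR a hmem, ?_, ?_, zoneBar a hmem, zoneBar' a hmem⟩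
          · exact Or.inl ⟨rfl, rfl, Or.inr (Or.inr ⟨rfl, by norm_num⟩)⟩
          · have hy2 : rc ((a, -1, true) : Tri) ∉ TR := by
              rw [hrc_dn]
              exact zoneUpTR _ (hOcm' a hmem)
            rw [hrg3 g _ (zoneDnTR a) hy2 (zoneDnHR a hmem)]
            exact hvfl_dn a
        · rw [hrg3 g _ h1 h2 ht, hvfl_dn]
          refine ⟨zoneUpHR a hmem, ?_, ?_, zoneBar' a hmem, zoneBar a hmem⟩
          · exact Or.inr ⟨rfl, rfl, Or.inr (Or.inr ⟨rfl, by norm_num⟩)⟩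
          · have hy2 : rc ((a, 0, false) : Tri) ∉ TR := by
              rw [hrc_up]
              exact zoneDnTR _
            rw [hrg3 g _ (zoneUpTR a hmem) hy2 (zoneUpHR a hmem)]
            exact hvfl_up a
  have bwdS : ∀ (g : Tri → Tri), IsTiling TR ∅ g →
      ∀ t, recon g (rc t) = rc (recon g t) := by
    intro g hg t
    by_cases h1 : t ∈ TR
    · rw [hrg g t h1, hrg2 g (rc t) (hrcTR_neg h1) (by rw [hrcrc]; exact h1), hrcrc]
    · by_cases h2 : rc t ∈ TR
      · rw [hrg g _ h2, hrg2 g t h1 h2, hrcrc]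
      · by_cases h3 : t ∈ HR
        · rw [hrg3 g t h1 h2 h3, hrg3 g (rc t) h2 (by rw [hrcrc]; exact h1) (hrcHR h3)]
          obtain ⟨a, j, o⟩ := t
          cases o
          · exact Prod.ext rfl (Prod.ext (by show (0 : ℤ) = 0 - (-1) - 1; norm_num) rfl)
          · exact Prod.ext rfl (Prod.ext (by show (-1 : ℤ) = 0 - 0 - 1; norm_num) rfl)
        · rw [hrg4 g t h3, hrg4 g (rc t) (fun hc => h3 (hrcHR' hc))]
  have fwdT : ∀ (f : Tri → Tri), IsTiling HR (HBar ↑B') f →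
      IsTiling TR ∅ (fun t => if t ∈ TR then f t else t) := by
    intro f hf
    have hmaps := fwd f hf
    obtain ⟨hfout, hfmem⟩ := hf
    refine ⟨fun t ht => if_neg ht, ?_⟩
    intro t ht
    have hft := hmaps t ht
    obtain ⟨-, hadj, hff, -, -⟩ := hfmem t (hTRHR ht)
    refine ⟨?_, ?_, ?_, Set.notMem_empty _, Set.notMem_empty _⟩
    · show (if t ∈ TR then f t else t) ∈ TR
      rw [if_pos ht]
      exact hft
    · show adj t (if t ∈ TR then f t else t)
      rw [if_pos ht]
      exact hadj
    · show (if (if t ∈ TR then f t else t) ∈ TR then f (if t ∈ TR then f t else t)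
          else (if t ∈ TR then f t else t)) = t
      rw [if_pos ht, if_pos hft]
      exact hff
  unfold Mc M
  refine Nat.card_congr ?_
  refine
    { toFun := fun p => ⟨fun t => if t ∈ TR then p.1 t else t, fwdT p.1 p.2.1⟩,
      invFun := fun q => ⟨recon q.1, bwdT q.1 q.2, fun t => by
        have := bwdS q.1 q.2 t
        rwa [hrcdef] at this⟩,
      left_inv := ?_, right_inv := ?_ }
  · rintro ⟨f, hf, hsym⟩
    refine Subtype.ext (funext fun t => ?_)
    simp only
    have hforce := forcing hU'N hcard hzN hf
    obtain ⟨hfout, hfmem⟩ := hf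
    have hsym' : ∀ s, f (rc s) = rc (f s) := by
      intro s
      rw [hrcdef]
      exact hsym s
    set g := fun s => if s ∈ TR then f s else s with hgdef
    by_cases h1 : t ∈ TR
    · rw [hrg g t h1, hgdef]
      simp only [if_pos h1]
    · by_cases h2 : rc t ∈ TR
      · rw [hrg2 g t h1 h2, hgdef]
        simp only [if_pos h2]
        rw [hsym', hrcrc]
      · by_cases h3 : t ∈ HR
        · rw [hrg3 g t h1 h2 h3]
          obtain ⟨a, j, o⟩ := t
          rcases hzone h3 h1 h2 with ⟨ho, hj, hmem⟩ | ⟨ho, hj, hmem⟩ <;> subst ho <;> subst hj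
          · rw [hvfl_up]
            have hfc := hforce (a + 1) hmem
            rw [show (a:ℤ) + 1 - 1 = a by ring] at hfc
            exact hfc.symm
          · rw [hvfl_dn]
            have hup := hforce (a + 1) hmem
            rw [show (a:ℤ) + 1 - 1 = a by ring] at hup
            obtain ⟨-, -, hff, -, -⟩ := hfmem _ (zoneUpHR a hmem)
            rw [hup] at hff
            exact hff.symm
        · rw [hrg4 g t h3, hfout t h3]
  · rintro ⟨g, hg⟩
    refine Subtype.ext (funext fun t => ?_)
    simp only
    by_cases h1 : t ∈ TR
    · rw [if_pos h1, hrg g t h1]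
    · rw [if_neg h1]
      exact (hg.1 t h1).symm

/-- base case `x = 2b`. -/
theorem stmt14 (y b : ℕ) (U D B : Finset ℤ) (hb : B.card = b)
    (n : ℕ) (hn : n = (U ∪ D).card) (N : ℕ) (hN : N = 2 * b + y + 2 * n)
    (m : ℕ) (hm : m = 2 * n - U.card - D.card)
    (hU : U ⊆ Icc 1 ((N / 2 : ℕ) : ℤ)) (hD : D ⊆ Icc 1 ((N / 2 : ℕ) : ℤ))
    (hB : B ⊆ Icc 1 ((N / 2 : ℕ) : ℤ))
    (hBd : B ∩ (U ∪ D) = ∅)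
    (O : Finset ℤ) (hO : O = (U ∪ D ∪ B) ∪ mir (N : ℤ) (U ∪ D ∪ B)) :
    McCS (2 * b) y U D B =
      MT ((y + U.card + D.card : ℕ) : ℤ) ((2 * b + m : ℕ) : ℤ)
        ((Icc (1 : ℤ) (N : ℤ) \ O) ∪ U ∪ mir (N : ℤ) D) := by
  classical
  have hu_le : U.card ≤ n := by
    rw [hn]
    exact Finset.card_le_card Finset.subset_union_left
  have hd_le : D.card ≤ n := by
    rw [hn]
    exact Finset.card_le_card Finset.subset_union_right
  have hhalf : 2 * (N / 2) ≤ N := by omega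
  have hc2 : (2 : ℤ) * ((N / 2 : ℕ) : ℤ) ≤ (N : ℤ) := by exact_mod_cast hhalf
  have hdisjMir : ∀ V W : Finset ℤ, V ⊆ Icc 1 ((N / 2 : ℕ) : ℤ) →
      W ⊆ Icc 1 ((N / 2 : ℕ) : ℤ) → Disjoint V (mir (N : ℤ) W) := by
    intro V W hV hW
    rw [Finset.disjoint_left]
    intro x hxV hxM
    have h1 := hV hxV
    rw [Finset.mem_Icc] at h1
    rw [mem_mir] at hxM
    have h2 := hW hxM
    rw [Finset.mem_Icc] at h2
    omega
  have hmirsub : ∀ W : Finset ℤ, W ⊆ Icc 1 ((N / 2 : ℕ) : ℤ) →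
      mir (N : ℤ) W ⊆ Icc 1 (N : ℤ) := by
    intro W hW x hx
    rw [mem_mir] at hx
    have h2 := hW hx
    rw [Finset.mem_Icc] at h2 ⊢
    omega
  have hUD2 : U ∪ D ⊆ Icc 1 ((N / 2 : ℕ) : ℤ) := Finset.union_subset hU hD
  have hUDB : U ∪ D ∪ B ⊆ Icc 1 ((N / 2 : ℕ) : ℤ) := Finset.union_subset hUD2 hB
  have hNz : ((2 * b : ℕ) : ℤ) + (y : ℤ) + 2 * (((U ∪ D).card : ℕ) : ℤ) = (N : ℤ) := by
    push_cast
    omega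
  have hcardU' : (U ∪ mir (N : ℤ) D).card = U.card + D.card := by
    rw [Finset.card_union_of_disjoint (hdisjMir U D hU hD), mir_card]
  have hcardD' : (D ∪ mir (N : ℤ) U).card = D.card + U.card := by
    rw [Finset.card_union_of_disjoint (hdisjMir D U hD hU), mir_card]
  have hUDeq : (U ∪ mir (N : ℤ) D) ∪ (D ∪ mir (N : ℤ) U) = (U ∪ D) ∪ mir (N : ℤ) (U ∪ D) := by
    rw [mir_union]
    ext x
    simp only [Finset.mem_union]
    tauto
  have hcardUD : ((U ∪ mir (N : ℤ) D) ∪ (D ∪ mir (N : ℤ) U)).card = 2 * n := by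
    rw [hUDeq, Finset.card_union_of_disjoint (hdisjMir _ _ hUD2 hUD2), mir_card, hn]
    omega
  have hOall : (U ∪ mir (N : ℤ) D) ∪ (D ∪ mir (N : ℤ) U) ∪ (B ∪ mir (N : ℤ) B) =
      (U ∪ D ∪ B) ∪ mir (N : ℤ) (U ∪ D ∪ B) := by
    rw [mir_union, mir_union]
    ext x
    simp only [Finset.mem_union]
    tauto
  have hdisjB : Disjoint (U ∪ D) B := by
    rw [Finset.disjoint_right]
    intro a ha hc
    have : a ∈ B ∩ (U ∪ D) := Finset.mem_inter.mpr ⟨ha, hc⟩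
    rw [hBd] at this
    exact absurd this (Finset.notMem_empty a)
  have hcardW : (U ∪ D ∪ B).card = n + b := by
    rw [Finset.card_union_of_disjoint hdisjB, hn, hb]
  have hcardO : ((U ∪ D ∪ B) ∪ mir (N : ℤ) (U ∪ D ∪ B)).card = 2 * (n + b) := by
    rw [Finset.card_union_of_disjoint (hdisjMir _ _ hUDB hUDB), mir_card, hcardW]
    omega
  have hOsub : (U ∪ D ∪ B) ∪ mir (N : ℤ) (U ∪ D ∪ B) ⊆ Icc 1 (N : ℤ) := by
    refine Finset.union_subset (fun x hx => ?_) (hmirsub _ hUDB)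
    have := hUDB hx
    rw [Finset.mem_Icc] at this ⊢
    omega
  have hNb : 2 * (n + b) ≤ N := by omega
  have hcardOc : ((Icc 1 (N : ℤ) \ ((U ∪ mir (N : ℤ) D) ∪ (D ∪ mir (N : ℤ) U) ∪ (B ∪ mir (N : ℤ) B))).card : ℤ) =
      (N : ℤ) - 2 * (n + b) := by
    rw [hOall, Finset.card_sdiff_of_subset hOsub]
    have hle := Finset.card_le_card hOsub
    have hIcc : (Icc (1 : ℤ) (N : ℤ)).card = N := by
      rw [Int.card_Icc]
      omega
    rw [hIcc] at hle ⊢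
    rw [hcardO] at hle ⊢
    omega
  -- core hypotheses
  have hU'N : U ∪ mir (N : ℤ) D ⊆ Icc 1 (N : ℤ) := by
    refine Finset.union_subset (fun x hx => ?_) (hmirsub _ hD)
    have := hU hx
    rw [Finset.mem_Icc] at this ⊢
    omega
  have hD'eq : D ∪ mir (N : ℤ) U = mir (N : ℤ) (U ∪ mir (N : ℤ) D) := by
    rw [mir_union, mir_mir, Finset.union_comm]
  have hB'eq : B ∪ mir (N : ℤ) B = mir (N : ℤ) (B ∪ mir (N : ℤ) B) := by
    rw [mir_union, mir_mir, Finset.union_comm]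
  have hzdef : ((y : ℤ) + U.card + D.card) =
      ((Icc 1 (N : ℤ) \ ((U ∪ mir (N : ℤ) D) ∪ (D ∪ mir (N : ℤ) U) ∪ (B ∪ mir (N : ℤ) B))).card : ℤ) +
        ((U ∪ mir (N : ℤ) D).card : ℤ) := by
    rw [hcardOc, hcardU']
    omega
  have hzN : ((y : ℤ) + U.card + D.card) ≤ (N : ℤ) := by
    omega
  have hcore := core hU'N hD'eq hB'eq hzdef hzN
  -- rewrite the goal to match
  simp only [McCS, MT]
  rw [hNz]
  have eL : ((2 * b : ℕ) : ℤ) + (y : ℤ) +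
      (((U ∪ mir (N : ℤ) D ∪ (D ∪ mir (N : ℤ) U)).card : ℕ) : ℤ) = (N : ℤ) := by
    rw [hcardUD]
    push_cast
    omega
  have ehu : ((y : ℤ) + (((U ∪ mir (N : ℤ) D).card : ℕ) : ℤ)) =
      ((y : ℤ) + U.card + D.card) := by
    rw [hcardU']
    push_cast
    ring
  have ehd : ((y : ℤ) + (((D ∪ mir (N : ℤ) U).card : ℕ) : ℤ)) =
      ((y : ℤ) + U.card + D.card) := by
    rw [hcardD']
    push_cast
    ring
  rw [eL, ehu, ehd]
  have ea : (((y + U.card + D.card : ℕ)) : ℤ) = ((y : ℤ) + U.card + D.card) := by push_cast; ring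
  have eb : (((2 * b + m : ℕ)) : ℤ) = (N : ℤ) - ((y : ℤ) + U.card + D.card) := by
    push_cast [hm]
    omega
  have eS : Icc 1 (N : ℤ) \ O ∪ U ∪ mir (N : ℤ) D =
      (Icc 1 (N : ℤ) \ ((U ∪ mir (N : ℤ) D) ∪ (D ∪ mir (N : ℤ) U) ∪ (B ∪ mir (N : ℤ) B))) ∪
        (U ∪ mir (N : ℤ) D) := by
    rw [hO, hOall, Finset.union_assoc]
  rw [ea, eb, eS]
  exact hcore

end Shuf
end
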